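/- arXiv:2106.13128 — 7 statements merged into one kernel-verified Lean document; each statement's English description precedes it below -/
import Mathlib

section
/- Let d ≥ 2 and let (X_i)_{i∈ℤ^d} be an orthomartingale difference random field with respect to a commuting filtration (F_i)_{i∈ℤ^d}. Fix n = (n_1,…,n_d) ∈ ℕ^d with n ≽ 1. For N ≥ 1 define M_N := max_{1≤i_q≤n_q, 1≤q≤d−1} |S_{(i_1,…,i_{d−1},N)}| and G_N := F_{(n_1,…,n_{d−1},N)}. Then (M_N)_{N≥1} is a submartingale with respect to the filtration (G_N)_{N≥1}, i.e. each M_N is integrable, G_N-measurable, and E[M_N | G_{N−1}] ≥ M_{N−1} a.s. for N ≥ 2. -/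
open MeasureTheory ProbabilityTheory

/-- `(F i)_{i ∈ ℤ^d}` is a commuting filtration on `(Ω, m0, μ)`:
each `F i` is a sub-σ-algebra, `F` is monotone for the coordinatewise order, and
conditional expectations with respect to the `F i` commute in the sense that
`E[E[Y | F i] | F j] = E[Y | F (min(i,j))]` a.s. for every integrable `Y`. -/
def CommutingFiltration {Ω : Type*} [m0 : MeasurableSpace Ω] (μ : Measure Ω)
    {d : ℕ} (F : (Fin d → ℤ) → MeasurableSpace Ω) : Prop :=
  (∀ i, F i ≤ m0) ∧
  (∀ i j : Fin d → ℤ, i ≤ j → F i ≤ F j) ∧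
  (∀ Y : Ω → ℝ, Integrable Y μ → ∀ i j : Fin d → ℤ,
    μ[(μ[Y | F i]) | F j] =ᵐ[μ] μ[Y | F (fun q => min (i q) (j q))])

/-- `(X i)_{i ∈ ℤ^d}` is an orthomartingale difference random field with respect to
the commuting filtration `(F i)`: each `X i` is integrable, `F i`-measurable, and
`E[X i | F (i - e q)] = 0` a.s. for every coordinate `q`. -/
def OrthomartingaleDiff {Ω : Type*} [m0 : MeasurableSpace Ω] (μ : Measure Ω)
    {d : ℕ} (F : (Fin d → ℤ) → MeasurableSpace Ω) (X : (Fin d → ℤ) → Ω → ℝ) : Prop :=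
  (∀ i, Integrable (X i) μ) ∧
  (∀ i, StronglyMeasurable[F i] (X i)) ∧
  (∀ (i : Fin d → ℤ) (q : Fin d), μ[X i | F (i - Pi.single q 1)] =ᵐ[μ] 0)



private lemma sm_abs {Ω : Type*} {m : MeasurableSpace Ω} {f : Ω → ℝ}
    (hf : StronglyMeasurable[m] f) : StronglyMeasurable[m] (fun ω => |f ω|) := by
  have h := hf.sup hf.neg
  have h2 : (f ⊔ -f) = fun ω => |f ω| := by
    funext ω; rw [Pi.sup_apply, Pi.neg_apply]; simp [abs_eq_max_neg, max_comm]
  rwa [h2] at h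

private lemma sm_sup' {Ω : Type*} {m : MeasurableSpace Ω} {ι : Type*} {s : Finset ι}
    (hs : s.Nonempty) {f : ι → Ω → ℝ} (hf : ∀ i ∈ s, StronglyMeasurable[m] (f i)) :
    StronglyMeasurable[m] (fun ω => s.sup' hs (fun i => f i ω)) := by
  have h : Measurable[m] (s.sup' hs f) :=
    Finset.measurable_sup' hs (fun i hi => (hf i hi).measurable)
  have h2 : (fun ω => s.sup' hs (fun i => f i ω)) = s.sup' hs f := by
    funext ω; rw [Finset.sup'_apply]
  rw [h2]; exact h.stronglyMeasurable


/-- Let `d = e + 1 ≥ 2` and let `(X_i)_{i∈ℤ^d}` be an orthomartingale difference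
random field with respect to a commuting filtration `(F_i)`. Fix `n ≽ 1` and set,
for `N ≥ 1`, `M_N = max_{1≤i_q≤n_q, q<d} |S_{(i_1,…,i_{d-1},N)}|` and
`G_N = F_{(n_1,…,n_{d-1},N)}`. Then `(M_N)_{N≥1}` is a submartingale with respect
to `(G_N)_{N≥1}`: each `M_N` is integrable and `G_N`-measurable, and
`E[M_N | G_{N-1}] ≥ M_{N-1}` a.s. for `N ≥ 2`. -/
theorem max_partial_sums_submartingale (e : ℕ) (he : 1 ≤ e)
    {Ω : Type*} {m0 : MeasurableSpace Ω} (μ : Measure Ω) [IsProbabilityMeasure μ]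
    (F : (Fin (e + 1) → ℤ) → MeasurableSpace Ω) (X : (Fin (e + 1) → ℤ) → Ω → ℝ)
    (hF : CommutingFiltration μ F) (hX : OrthomartingaleDiff μ F X)
    (n : Fin (e + 1) → ℤ) (hn : (1 : Fin (e + 1) → ℤ) ≤ n)
    (M : ℤ → Ω → ℝ)
    (hM : ∀ (N : ℤ) (ω : Ω), M N ω =
      (Finset.Icc (1 : Fin e → ℤ) (Fin.init n)).sup'
        (Finset.nonempty_Icc.mpr (fun q => hn q.castSucc))
        (fun i' => |∑ j ∈ Finset.Icc 1 (Fin.snoc i' N : Fin (e + 1) → ℤ), X j ω|))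
    (G : ℤ → MeasurableSpace Ω)
    (hG : ∀ N : ℤ, G N = F (Fin.snoc (Fin.init n) N)) :
    (∀ N : ℤ, 1 ≤ N → Integrable (M N) μ) ∧
    (∀ N : ℤ, 1 ≤ N → StronglyMeasurable[G N] (M N)) ∧
    (∀ N : ℤ, 2 ≤ N → M (N - 1) ≤ᵐ[μ] μ[M N | G (N - 1)]) := by
  classical
  obtain ⟨hFle, hFmono, hFcomm⟩ := hF
  obtain ⟨hXint, hXmeas, hXmd⟩ := hX
  set s : Finset (Fin e → ℤ) := Finset.Icc (1 : Fin e → ℤ) (Fin.init n) with hs_def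
  have hs : s.Nonempty := Finset.nonempty_Icc.mpr fun q => hn q.castSucc
  -- snoc monotonicity
  have hsnoc_le : ∀ (a b : Fin e → ℤ) (N N' : ℤ), a ≤ b → N ≤ N' →
      (Fin.snoc a N : Fin (e+1) → ℤ) ≤ Fin.snoc b N' := by
    intro a b N N' hab hNN' q
    refine Fin.lastCases ?_ (fun q => ?_) q
    · simpa using hNN'
    · simpa using hab q
  have hone_le_snoc : ∀ (a : Fin e → ℤ) (N : ℤ), (1 : Fin e → ℤ) ≤ a → 1 ≤ N →
      (1 : Fin (e+1) → ℤ) ≤ Fin.snoc a N := by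
    intro a N ha hN q
    refine Fin.lastCases ?_ (fun q => ?_) q
    · simpa using hN
    · simpa using ha q
  -- partial sums
  set S : (Fin e → ℤ) → ℤ → Ω → ℝ :=
    fun i' N ω => ∑ j ∈ Finset.Icc 1 (Fin.snoc i' N : Fin (e + 1) → ℤ), X j ω with hS_def
  have hSint : ∀ (i' : Fin e → ℤ) (N : ℤ), Integrable (S i' N) μ :=
    fun i' N => integrable_finset_sum _ fun j _ => hXint j
  have hSmeas : ∀ (N : ℤ), ∀ i' ∈ s, StronglyMeasurable[F (Fin.snoc (Fin.init n) N)] (S i' N) := by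
    intro N i' hi'
    refine Finset.stronglyMeasurable_fun_sum _ fun j hj => ?_
    refine (hXmeas j).mono (hFmono _ _ ?_)
    have hj' := (Finset.mem_Icc.mp hj).2
    have hi'' : i' ≤ Fin.init n := (Finset.mem_Icc.mp hi').2
    exact le_trans hj' (hsnoc_le _ _ _ _ hi'' le_rfl)
  -- M as sup'
  have hM' : ∀ N : ℤ, M N = fun ω => s.sup' hs (fun i' => |S i' N ω|) := by
    intro N; funext ω; exact hM N ω
  -- measurability of M
  have hMmeas : ∀ N : ℤ, StronglyMeasurable[G N] (M N) := by
    intro N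
    rw [hG N, hM']
    exact sm_sup' hs (fun i' hi' => sm_abs (hSmeas N i' hi'))
  -- pointwise bound |S i' N| ≤ M N
  have habs_le : ∀ N : ℤ, ∀ i' ∈ s, ∀ ω, |S i' N ω| ≤ M N ω := by
    intro N i' hi' ω
    rw [hM N ω]
    exact Finset.le_sup'
      (fun i'' => |∑ j ∈ Finset.Icc 1 (Fin.snoc i'' N : Fin (e + 1) → ℤ), X j ω|) hi'
  have hMnonneg : ∀ (N : ℤ) (ω : Ω), 0 ≤ M N ω := by
    intro N ω
    exact le_trans (abs_nonneg _) (habs_le N hs.choose hs.choose_spec ω)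
  -- integrability of M
  have hMint : ∀ N : ℤ, Integrable (M N) μ := by
    intro N
    have hbound : Integrable (fun ω => ∑ i' ∈ s, |S i' N ω|) μ :=
      integrable_finset_sum _ fun i' _ => (hSint i' N).abs
    refine Integrable.mono' hbound
      (((hMmeas N).mono (hG N ▸ hFle _)).aestronglyMeasurable) ?_
    refine Filter.Eventually.of_forall fun ω => ?_
    rw [Real.norm_eq_abs, abs_of_nonneg (hMnonneg N ω), hM N ω]
    refine Finset.sup'_le hs _ fun i' hi' => ?_
    exact Finset.single_le_sum (fun j _ => abs_nonneg (S j N ω)) hi'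
  refine ⟨fun N _ => hMint N, fun N _ => hMmeas N, ?_⟩
  -- the submartingale property
  intro N hN
  have hmle : G (N - 1) ≤ m0 := by rw [hG]; exact hFle _
  -- key: conditional expectation of S i' N is S i' (N-1)
  have hkey : ∀ i' ∈ s, μ[S i' N | G (N - 1)] =ᵐ[μ] S i' (N - 1) := by
    intro i' hi'
    have hi'' : i' ≤ Fin.init n := (Finset.mem_Icc.mp hi').2
    -- set splitting
    have hset : Finset.Icc (1 : Fin (e+1) → ℤ) (Fin.snoc i' N) =
        Finset.Icc 1 (Fin.snoc i' (N-1)) ∪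
          (Finset.Icc (1 : Fin e → ℤ) i').image (fun j' => (Fin.snoc j' N : Fin (e+1) → ℤ)) := by
      ext j
      simp only [Finset.mem_union, Finset.mem_Icc, Finset.mem_image]
      constructor
      · rintro ⟨h1, h2⟩
        by_cases hlast : j (Fin.last e) ≤ N - 1
        · left
          refine ⟨h1, fun q => ?_⟩
          refine Fin.lastCases ?_ (fun q => ?_) q
          · simpa using hlast
          · simpa using h2 q.castSucc
        · right
          have hlastN : j (Fin.last e) = N := by
            have := h2 (Fin.last e)
            simp only [Fin.snoc_last] at this
            omega
          refine ⟨Fin.init j, ⟨fun q => ?_, fun q => ?_⟩, ?_⟩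
          · simpa [Fin.init] using h1 q.castSucc
          · simpa [Fin.init] using h2 q.castSucc
          · rw [← hlastN]; exact Fin.snoc_init_self j
      · rintro (⟨h1, h2⟩ | ⟨j', ⟨hj1, hj2⟩, rfl⟩)
        · exact ⟨h1, le_trans h2 (hsnoc_le i' i' (N-1) N le_rfl (by omega))⟩
        · exact ⟨hone_le_snoc j' N hj1 (by omega), hsnoc_le j' i' N N hj2 le_rfl⟩
    have hdisj : Disjoint (Finset.Icc (1 : Fin (e+1) → ℤ) (Fin.snoc i' (N-1)))
        ((Finset.Icc (1 : Fin e → ℤ) i').image (fun j' => (Fin.snoc j' N : Fin (e+1) → ℤ))) := by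
      rw [Finset.disjoint_left]
      rintro j hj hj2
      simp only [Finset.mem_image, Finset.mem_Icc] at hj hj2
      obtain ⟨j', _, rfl⟩ := hj2
      have := hj.2 (Fin.last e)
      simp only [Fin.snoc_last] at this
      omega
    have hinj : ∀ a ∈ Finset.Icc (1 : Fin e → ℤ) i', ∀ b ∈ Finset.Icc (1 : Fin e → ℤ) i',
        (Fin.snoc a N : Fin (e+1) → ℤ) = Fin.snoc b N → a = b := by
      intro a _ b _ h
      funext q
      have := congrFun h q.castSucc
      simpa using this
    have hfun : S i' N = S i' (N - 1) + fun ω => ∑ j' ∈ Finset.Icc (1 : Fin e → ℤ) i',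
        X (Fin.snoc j' N) ω := by
      funext ω
      simp only [hS_def, Pi.add_apply]
      rw [hset, Finset.sum_union hdisj, Finset.sum_image hinj]
    -- right part has zero conditional expectation
    have hright0 : ∀ j' ∈ Finset.Icc (1 : Fin e → ℤ) i',
        μ[X (Fin.snoc j' N) | G (N - 1)] =ᵐ[μ] 0 := by
      intro j' hj'
      obtain ⟨hj1, hj2⟩ := Finset.mem_Icc.mp hj'
      set j : Fin (e+1) → ℤ := Fin.snoc j' N with hj_def
      have hXj : μ[X j | F j] = X j :=
        condExp_of_stronglyMeasurable (hFle j) (hXmeas j) (hXint j)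
      have hmin : (fun q => min (j q) (Fin.snoc (Fin.init n) (N - 1) q)) =
          j - Pi.single (Fin.last e) 1 := by
        funext q
        refine Fin.lastCases ?_ (fun q => ?_) q
        · simp only [hj_def, Fin.snoc_last, Pi.sub_apply, Pi.single_eq_same]
          omega
        · have hne : (q.castSucc : Fin (e+1)) ≠ Fin.last e := (Fin.castSucc_lt_last q).ne
          simp only [hj_def, Fin.snoc_castSucc, Pi.sub_apply, Pi.single_eq_of_ne hne,
            sub_zero]
          exact min_eq_left (le_trans (hj2 q) (hi'' q))
      calc μ[X j | G (N - 1)] = μ[μ[X j | F j] | F (Fin.snoc (Fin.init n) (N - 1))] := by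
            rw [hXj, hG]
        _ =ᵐ[μ] μ[X j | F (fun q => min (j q) (Fin.snoc (Fin.init n) (N - 1) q))] :=
            hFcomm (X j) (hXint j) j _
        _ = μ[X j | F (j - Pi.single (Fin.last e) 1)] := by rw [hmin]
        _ =ᵐ[μ] 0 := hXmd j (Fin.last e)
    -- left part is G (N-1)-measurable
    have hleft : μ[S i' (N - 1) | G (N - 1)] = S i' (N - 1) := by
      refine condExp_of_stronglyMeasurable hmle ?_ (hSint i' (N - 1))
      rw [hG]
      exact hSmeas (N - 1) i' hi'
    have hrightint : Integrable (fun ω => ∑ j' ∈ Finset.Icc (1 : Fin e → ℤ) i',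
        X (Fin.snoc j' N) ω) μ := integrable_finset_sum _ fun j' _ => hXint _
    have hsumfun : (fun ω => ∑ j' ∈ Finset.Icc (1 : Fin e → ℤ) i', X (Fin.snoc j' N) ω) =
        ∑ j' ∈ Finset.Icc (1 : Fin e → ℤ) i', X (Fin.snoc j' N) := by
      funext ω; rw [Finset.sum_apply]
    have hrightce : μ[(fun ω => ∑ j' ∈ Finset.Icc (1 : Fin e → ℤ) i',
        X (Fin.snoc j' N) ω) | G (N - 1)] =ᵐ[μ] 0 := by
      rw [hsumfun]
      refine (condExp_finset_sum (fun j' _ => hXint _) (G (N - 1))).trans ?_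
      have hae : ∀ᵐ ω ∂μ, ∀ j' ∈ Finset.Icc (1 : Fin e → ℤ) i',
          (μ[X (Fin.snoc j' N) | G (N - 1)]) ω = 0 := by
        rw [Filter.eventually_all_finset]
        exact fun j' hj' => hright0 j' hj'
      filter_upwards [hae] with ω hω
      simp only [Finset.sum_apply, Pi.zero_apply]
      exact Finset.sum_eq_zero fun j' hj' => hω j' hj'
    calc μ[S i' N | G (N - 1)]
        =ᵐ[μ] μ[S i' (N - 1) | G (N - 1)] + μ[(fun ω => ∑ j' ∈ Finset.Icc (1 : Fin e → ℤ) i',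
          X (Fin.snoc j' N) ω) | G (N - 1)] := by
          rw [hfun]
          exact condExp_add (hSint i' (N - 1)) hrightint (G (N - 1))
      _ =ᵐ[μ] S i' (N - 1) + 0 := by
          rw [hleft]
          exact Filter.EventuallyEq.add (Filter.EventuallyEq.refl _ _) hrightce
      _ = S i' (N - 1) := by rw [add_zero]
  -- assemble: for each i', |S i' (N-1)| ≤ᵐ μ[M N | G (N-1)]
  have hstep : ∀ i' ∈ s, ∀ᵐ ω ∂μ, |S i' (N - 1) ω| ≤ (μ[M N | G (N - 1)]) ω := by
    intro i' hi'
    have ha : μ[S i' N | G (N - 1)] ≤ᵐ[μ] μ[(fun ω => |S i' N ω|) | G (N - 1)] :=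
      condExp_mono (hSint i' N) (hSint i' N).abs
        (Filter.Eventually.of_forall fun ω => le_abs_self _)
    have hb : μ[-S i' N | G (N - 1)] ≤ᵐ[μ] μ[(fun ω => |S i' N ω|) | G (N - 1)] :=
      condExp_mono (hSint i' N).neg (hSint i' N).abs
        (Filter.Eventually.of_forall fun ω => neg_le_abs _)
    have hc := condExp_neg (μ := μ) (m := G (N - 1)) (S i' N)
    have h3 : μ[(fun ω => |S i' N ω|) | G (N - 1)] ≤ᵐ[μ] μ[M N | G (N - 1)] :=
      condExp_mono (hSint i' N).abs (hMint N)
        (Filter.Eventually.of_forall fun ω => habs_le N i' hi' ω)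
    filter_upwards [hkey i' hi', ha, hb, hc, h3] with ω hk ha hb hc h3
    have hb' : -(μ[S i' N | G (N - 1)]) ω ≤ (μ[(fun ω => |S i' N ω|) | G (N - 1)]) ω := by
      rw [← Pi.neg_apply, ← hc]; exact hb
    have habs : |(μ[S i' N | G (N - 1)]) ω| ≤ (μ[(fun ω => |S i' N ω|) | G (N - 1)]) ω := by
      rw [abs_le]; exact ⟨by linarith, ha⟩
    calc |S i' (N - 1) ω| = |(μ[S i' N | G (N - 1)]) ω| := by rw [hk]
      _ ≤ (μ[(fun ω => |S i' N ω|) | G (N - 1)]) ω := habs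
      _ ≤ (μ[M N | G (N - 1)]) ω := h3
  have hall : ∀ᵐ ω ∂μ, ∀ i' ∈ s, |S i' (N - 1) ω| ≤ (μ[M N | G (N - 1)]) ω := by
    rw [Filter.eventually_all_finset]
    exact hstep
  filter_upwards [hall] with ω hω
  rw [hM (N - 1) ω]
  exact Finset.sup'_le hs _ fun i' hi' => hω i' hi'
end

section
/- Let d ≥ 2 and let (X_i)_{i∈ℤ^d} be an orthomartingale difference random field with respect to a commuting filtration (F_i)_{i∈ℤ^d}. Then for every n = (n_1,…,n_d) ∈ ℕ^d with n ≽ 1 and every x > 0, P( max_{1≼i≼n} |S_i| > x ) ≤ ∫_1^∞ P( max_{1≤i_q≤n_q, 1≤q≤d−1} |S_{(i_1,…,i_{d−1},n_d)}| > x u / 2 ) du. -/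
open MeasureTheory ProbabilityTheory

open scoped NNReal ENNReal

section Aux

variable {Ω : Type*} {m0 : MeasurableSpace Ω} {μ : Measure Ω} {e : ℕ}

lemma snoc_le_snoc' {i' j' : Fin e → ℤ} {a b : ℤ} (h1 : i' ≤ j') (h2 : a ≤ b) :
    (Fin.snoc i' a : Fin (e+1) → ℤ) ≤ Fin.snoc j' b := by
  intro q
  induction q using Fin.lastCases with
  | last => simpa using h2
  | cast p => simpa using h1 p

lemma integral_comp_add_right_Ioi' (g : ℝ → ℝ) (a c : ℝ) :
    ∫ x in Set.Ioi a, g (x + c) = ∫ x in Set.Ioi (a + c), g x := by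
  have h := (measurePreserving_add_right (volume : Measure ℝ) c).setIntegral_preimage_emb
    (MeasurableEquiv.addRight c).measurableEmbedding g (Set.Ioi (a + c))
  simpa [Set.preimage_add_const_Ioi] using h

/-- The index function capped at `N`. -/
def kap (N k : ℕ) : ℤ := ((1 + min k N : ℕ) : ℤ)

lemma kap_mono (N : ℕ) : Monotone (kap N) := fun k l hkl => by
  simp only [kap, Nat.cast_le]
  omega

/-- The filtration `k ↦ F (snoc n' (kap N k))`. -/
def auxFilt (F : (Fin (e+1) → ℤ) → MeasurableSpace Ω) (hF : CommutingFiltration μ F)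
    (n' : Fin e → ℤ) (N : ℕ) : Filtration ℕ m0 where
  seq k := F (Fin.snoc n' (kap N k))
  mono' k l hkl := hF.2.1 _ _ (snoc_le_snoc' le_rfl (kap_mono N hkl))
  le' k := hF.1 _

lemma auxFilt_apply (F : (Fin (e+1) → ℤ) → MeasurableSpace Ω) (hF : CommutingFiltration μ F)
    (n' : Fin e → ℤ) (N k : ℕ) : auxFilt F hF n' N k = F (Fin.snoc n' (kap N k)) := rfl

variable [IsProbabilityMeasure μ]

/-- conditional expectation of a single orthomartingale difference at an index whose last
coordinate exceeds the conditioning one vanishes. -/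
lemma condexp_X_zero (F : (Fin (e+1) → ℤ) → MeasurableSpace Ω) (X : (Fin (e+1) → ℤ) → Ω → ℝ)
    (hF : CommutingFiltration μ F) (hX : OrthomartingaleDiff μ F X)
    {n' : Fin e → ℤ} {j : Fin (e+1) → ℤ} {m : ℤ}
    (hjn : ∀ p, j (Fin.castSucc p) ≤ n' p) (hjl : j (Fin.last e) = m + 1) :
    μ[X j | F (Fin.snoc n' m)] =ᵐ[μ] 0 := by
  have h0 : μ[X j | F j] = X j :=
    condExp_of_stronglyMeasurable (hF.1 j) (hX.2.1 j) (hX.1 j)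
  have h1 : μ[X j | F (Fin.snoc n' m)] =ᵐ[μ]
      μ[X j | F (fun q => min (j q) ((Fin.snoc n' m : Fin (e+1) → ℤ) q))] := by
    conv_lhs => rw [← h0]
    exact hF.2.2 (X j) (hX.1 j) j (Fin.snoc n' m)
  have h2 : (fun q => min (j q) ((Fin.snoc n' m : Fin (e+1) → ℤ) q)) =
      j - Pi.single (Fin.last e) 1 := by
    funext q
    induction q using Fin.lastCases with
    | last =>
      simp only [Fin.snoc_last, hjl, Pi.sub_apply, Pi.single_eq_same]
      omega
    | cast p =>
      have hne : Fin.castSucc p ≠ Fin.last e := Fin.castSucc_lt_last p |>.ne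
      simp only [Fin.snoc_castSucc, Pi.sub_apply, Pi.single_eq_of_ne hne, sub_zero]
      exact min_eq_left (hjn p)
  rw [h2] at h1
  exact h1.trans (hX.2.2 j (Fin.last e))


lemma martingale_aux (F : (Fin (e+1) → ℤ) → MeasurableSpace Ω) (X : (Fin (e+1) → ℤ) → Ω → ℝ)
    (hF : CommutingFiltration μ F) (hX : OrthomartingaleDiff μ F X)
    {n' i' : Fin e → ℤ} (hi' : i' ≤ n') (N : ℕ) :
    Martingale (fun k ω => ∑ j ∈ Finset.Icc (1 : Fin (e+1) → ℤ) (Fin.snoc i' (kap N k)), X j ω)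
      (auxFilt F hF n' N) μ := by
  have hmeas : ∀ k, StronglyMeasurable[auxFilt F hF n' N k]
      (fun ω => ∑ j ∈ Finset.Icc (1 : Fin (e+1) → ℤ) (Fin.snoc i' (kap N k)), X j ω) := by
    intro k
    refine Finset.stronglyMeasurable_fun_sum _ fun j hj => ?_
    rw [Finset.mem_Icc] at hj
    exact (hX.2.1 j).mono (hF.2.1 _ _ (hj.2.trans (snoc_le_snoc' hi' le_rfl)))
  have hint : ∀ k, Integrable
      (fun ω => ∑ j ∈ Finset.Icc (1 : Fin (e+1) → ℤ) (Fin.snoc i' (kap N k)), X j ω) μ :=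
    fun k => integrable_finset_sum _ fun j _ => hX.1 j
  refine martingale_nat (fun k => hmeas k) hint fun k => ?_
  by_cases hk : N ≤ k
  · have hkk : kap N (k+1) = kap N k := by simp only [kap]; congr 1; omega
    rw [hkk, condExp_of_stronglyMeasurable ((auxFilt F hF n' N).le k) (hmeas k) (hint k)]
  · push_neg at hk
    have hm1 : kap N (k+1) = kap N k + 1 := by
      simp only [kap]; push_cast; omega
    have hmeasK := hmeas k
    have hintK := hint k
    obtain ⟨m, hmdef⟩ : ∃ m, kap N k = m := ⟨_, rfl⟩
    rw [hmdef] at hmeasK hintK hm1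
    rw [hm1, hmdef]
    set T := Finset.Icc (1 : Fin (e+1) → ℤ) (Fin.snoc i' (m+1)) \ Finset.Icc 1 (Fin.snoc i' m) with hT
    have hsubset : Finset.Icc (1 : Fin (e+1) → ℤ) (Fin.snoc i' m) ⊆
        Finset.Icc 1 (Fin.snoc i' (m+1)) :=
      Finset.Icc_subset_Icc le_rfl (snoc_le_snoc' le_rfl (by omega))
    have hsplit : (fun ω => ∑ j ∈ Finset.Icc (1 : Fin (e+1) → ℤ) (Fin.snoc i' (m+1)), X j ω) =
        (fun ω => ∑ j ∈ Finset.Icc (1 : Fin (e+1) → ℤ) (Fin.snoc i' m), X j ω) +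
          ∑ j ∈ T, X j := by
      funext ω
      simp only [Pi.add_apply, Finset.sum_apply, hT]
      exact ((Finset.sum_sdiff hsubset).symm.trans (add_comm _ _))
    rw [hsplit]
    have hTzero : ∀ j ∈ T, μ[X j | (auxFilt F hF n' N) k] =ᵐ[μ] 0 := by
      intro j hj
      rw [hT, Finset.mem_sdiff, Finset.mem_Icc] at hj
      obtain ⟨⟨hj1, hj2⟩, hj3⟩ := hj
      have hcast : ∀ p, j (Fin.castSucc p) ≤ i' p := fun p => by
        simpa using hj2 (Fin.castSucc p)
      have hlast_le : j (Fin.last e) ≤ m + 1 := by simpa using hj2 (Fin.last e)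
      have hlast_gt : m < j (Fin.last e) := by
        by_contra hle
        push_neg at hle
        apply hj3
        rw [Finset.mem_Icc]
        refine ⟨hj1, fun q => ?_⟩
        induction q using Fin.lastCases with
        | last => simpa using hle
        | cast p => simpa using hcast p
      have hjl : j (Fin.last e) = m + 1 := by omega
      have hjn : ∀ p, j (Fin.castSucc p) ≤ n' p := fun p => (hcast p).trans (hi' p)
      have hGk : ((auxFilt F hF n' N) k : MeasurableSpace Ω) = F (Fin.snoc n' m) := by
        rw [auxFilt_apply, hmdef]
      rw [hGk]
      exact condexp_X_zero F X hF hX hjn hjl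
    have e2 : μ[(∑ j ∈ T, X j) | (auxFilt F hF n' N) k] =ᵐ[μ] 0 := by
      refine (condExp_finset_sum (fun j _ => hX.1 j) _).trans ?_
      have : (0 : Ω → ℝ) = ∑ j ∈ T, (0 : Ω → ℝ) := by simp
      rw [this]
      exact eventuallyEq_sum fun j hj => hTzero j hj
    have e1 := condExp_add (m := (auxFilt F hF n' N) k) (μ := μ)
      hintK (integrable_finset_sum' T fun j _ => hX.1 j)
    refine Filter.EventuallyEq.symm (e1.trans ?_)
    rw [condExp_of_stronglyMeasurable ((auxFilt F hF n' N).le k) hmeasK hintK]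
    filter_upwards [e2] with ω hω
    simp [hω]


lemma submartingale_abs {gg : ℕ → Ω → ℝ} {G : Filtration ℕ m0}
    (h : Martingale gg G μ) : Submartingale (fun k ω => |gg k ω|) G μ := by
  have := h.submartingale.sup h.neg.submartingale
  have heq : (fun k ω => |gg k ω|) = gg ⊔ (-gg) := by
    funext k ω
    simp [abs_eq_max_neg]
  rw [heq]
  exact this

lemma submartingale_finset_sup' {ι : Type*} {G : Filtration ℕ m0} (s : Finset ι)
    (hs : s.Nonempty) (h : ι → ℕ → Ω → ℝ) (hh : ∀ i ∈ s, Submartingale (h i) G μ) :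
    Submartingale (fun k ω => s.sup' hs fun i => h i k ω) G μ := by
  induction hs using Finset.Nonempty.cons_induction with
  | singleton i => simpa using hh i (by simp)
  | cons i s his hs ih =>
    have h1 := hh i (Finset.mem_cons_self _ _)
    have h2 := ih (fun j hj => hh j (Finset.mem_cons_of_mem hj))
    have h3 := h1.sup h2
    have heq : (fun k ω => (Finset.cons i s his).sup' (Finset.cons_nonempty his) fun j => h j k ω)
        = (h i) ⊔ (fun k ω => s.sup' hs fun j => h j k ω) := by
      funext k ω
      rw [Finset.sup'_cons hs]; rfl
    rw [heq]
    exact h3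

end Aux

set_option maxHeartbeats 2000000 in
/-- Doob-type step of the induction: if `d = e + 1 ≥ 2` and `(X_i)_{i∈ℤ^d}` is an
orthomartingale difference random field with respect to a commuting filtration,
then for every `n ≽ 1` and every `x > 0`,
`P(max_{1≼i≼n} |S_i| > x)
  ≤ ∫_1^∞ P(max_{1≤i_q≤n_q, q<d} |S_{(i_1,…,i_{d-1},n_d)}| > x u / 2) du`. -/
theorem max_tail_integral_bound (e : ℕ) (he : 1 ≤ e)
    {Ω : Type*} {m0 : MeasurableSpace Ω} (μ : Measure Ω) [IsProbabilityMeasure μ]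
    (F : (Fin (e + 1) → ℤ) → MeasurableSpace Ω) (X : (Fin (e + 1) → ℤ) → Ω → ℝ)
    (hF : CommutingFiltration μ F) (hX : OrthomartingaleDiff μ F X)
    (n : Fin (e + 1) → ℤ) (hn : (1 : Fin (e + 1) → ℤ) ≤ n)
    (x : ℝ) (hx : 0 < x) :
    (μ {ω | ∃ i ∈ Finset.Icc (1 : Fin (e + 1) → ℤ) n,
        x < |∑ j ∈ Finset.Icc 1 i, X j ω|}).toReal ≤
      ∫ u in Set.Ioi (1 : ℝ),
        (μ {ω | ∃ i' ∈ Finset.Icc (1 : Fin e → ℤ) (Fin.init n),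
          x * u / 2 <
            |∑ j ∈ Finset.Icc 1 (Fin.snoc i' (n (Fin.last e)) : Fin (e + 1) → ℤ),
              X j ω|}).toReal := by
  have hnd : (1 : ℤ) ≤ n (Fin.last e) := hn (Fin.last e)
  set N : ℕ := (n (Fin.last e) - 1).toNat with hNdef
  have hkapN : kap N N = n (Fin.last e) := by simp only [kap, hNdef]; push_cast; omega
  have hn' : (1 : Fin e → ℤ) ≤ Fin.init n := fun p => hn (Fin.castSucc p)
  have hI' : (Finset.Icc (1 : Fin e → ℤ) (Fin.init n)).Nonempty :=
    ⟨1, Finset.mem_Icc.mpr ⟨le_rfl, hn'⟩⟩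
  set f : ℕ → Ω → ℝ := fun k ω => (Finset.Icc (1 : Fin e → ℤ) (Fin.init n)).sup' hI'
    fun i' => |∑ j ∈ Finset.Icc (1 : Fin (e+1) → ℤ) (Fin.snoc i' (kap N k)), X j ω| with hfdef
  have hsubm : Submartingale f (auxFilt F hF (Fin.init n) N) μ := by
    refine submartingale_finset_sup' _ hI'
      (fun i' k ω => |∑ j ∈ Finset.Icc (1 : Fin (e+1) → ℤ) (Fin.snoc i' (kap N k)), X j ω|)
      (fun i' hi' => submartingale_abs ?_)
    exact martingale_aux F X hF hX ((Finset.mem_Icc.mp hi').2) N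
  have hf0 : 0 ≤ f := by
    intro k ω
    show (0:ℝ) ≤ (Finset.Icc (1 : Fin e → ℤ) (Fin.init n)).sup' hI'
      fun i' => |∑ j ∈ Finset.Icc (1 : Fin (e+1) → ℤ) (Fin.snoc i' (kap N k)), X j ω|
    exact (abs_nonneg _).trans (Finset.le_sup'
      (fun i' => |∑ j ∈ Finset.Icc (1 : Fin (e+1) → ℤ) (Fin.snoc i' (kap N k)), X j ω|)
      hI'.choose_spec)
  have key := maximal_ineq hsubm hf0 (ε := x.toNNReal) N
  have hcoe : ((x.toNNReal : ℝ≥0) : ℝ) = x := Real.coe_toNNReal x hx.le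
  rw [hcoe] at key
  set A := {ω | x ≤ (Finset.range (N+1)).sup' Finset.nonempty_range_add_one fun k => f k ω}
    with hAdef
  have hAmeas : MeasurableSet A :=
    measurableSet_le measurable_const (Finset.measurable_range_sup''
      fun k _ => (hsubm.stronglyMeasurable k).measurable.le ((auxFilt F hF (Fin.init n) N).le k))
  -- the maximal event contains the original event
  have hEA : {ω | ∃ i ∈ Finset.Icc (1 : Fin (e + 1) → ℤ) n,
      x < |∑ j ∈ Finset.Icc 1 i, X j ω|} ⊆ A := by
    rintro ω ⟨i, hi, hxi⟩
    rw [Finset.mem_Icc] at hi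
    have hk1 : 1 ≤ i (Fin.last e) := hi.1 (Fin.last e)
    have hk2 : i (Fin.last e) ≤ n (Fin.last e) := hi.2 (Fin.last e)
    set k : ℕ := (i (Fin.last e) - 1).toNat with hkdef
    have hkN : k ≤ N := by simp only [hkdef, hNdef]; omega
    have hkap : kap N k = i (Fin.last e) := by
      simp only [kap, hkdef]; push_cast; omega
    have hii' : Fin.init i ∈ Finset.Icc (1 : Fin e → ℤ) (Fin.init n) :=
      Finset.mem_Icc.mpr ⟨fun p => hi.1 (Fin.castSucc p), fun p => hi.2 (Fin.castSucc p)⟩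
    have hsnoc' : (Fin.snoc (Fin.init i) (kap N k) : Fin (e+1) → ℤ) = i := by
      rw [hkap]; exact Fin.snoc_init_self i
    have h1 : x ≤ f k ω := by
      refine le_trans hxi.le ?_
      show |∑ j ∈ Finset.Icc (1 : Fin (e+1) → ℤ) i, X j ω| ≤
        (Finset.Icc (1 : Fin e → ℤ) (Fin.init n)).sup' hI'
          fun i' => |∑ j ∈ Finset.Icc (1 : Fin (e+1) → ℤ) (Fin.snoc i' (kap N k)), X j ω|
      conv_lhs => rw [← hsnoc']
      exact Finset.le_sup' (fun i' =>
        |∑ j ∈ Finset.Icc (1 : Fin (e+1) → ℤ) (Fin.snoc i' (kap N k)), X j ω|) hii'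
    exact le_trans h1 (Finset.le_sup' (fun k => f k ω) (Finset.mem_range.mpr (by omega)))
  -- Doob's inequality in real form
  have hIntConst : Integrable (fun _ : Ω => x/2) μ := integrable_const _
  have hYint : Integrable (f N) μ := hsubm.integrable N
  have hSet_nonneg : 0 ≤ ∫ ω in A, f N ω ∂μ := setIntegral_nonneg hAmeas fun ω _ => hf0 N ω
  have hDoob : x * (μ A).toReal ≤ ∫ ω in A, f N ω ∂μ := by
    have h := ENNReal.toReal_mono ENNReal.ofReal_ne_top key
    rw [ENNReal.toReal_mul, ENNReal.toReal_ofReal hSet_nonneg] at h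
    simpa [NNReal.smul_def, hcoe] using h
  -- positive part
  set Z : Ω → ℝ := fun ω => max (f N ω - x/2) 0 with hZdef
  have hZint : Integrable Z μ := (hYint.sub hIntConst).pos_part
  have hZnn : 0 ≤ᵐ[μ] Z := Filter.Eventually.of_forall fun ω => le_max_right _ _
  have hlayer : ∫ ω, Z ω ∂μ = ∫ t in Set.Ioi (0:ℝ), (μ {a | t < Z a}).toReal :=
    hZint.integral_eq_integral_meas_lt hZnn
  have hstep1 : ∫ t in Set.Ioi (0:ℝ), (μ {a | t < Z a}).toReal
      = ∫ t in Set.Ioi (0:ℝ), (μ {a | t + x/2 < f N a}).toReal := by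
    refine setIntegral_congr_fun measurableSet_Ioi fun t ht => ?_
    congr 2
    ext a
    simp only [hZdef, Set.mem_setOf_eq, lt_max_iff]
    constructor
    · rintro (h | h)
      · linarith
      · exact absurd h (not_lt.mpr (le_of_lt ht))
    · intro h; left; linarith
  have hstep2 : ∫ t in Set.Ioi (0:ℝ), (μ {a | t + x/2 < f N a}).toReal
      = ∫ s in Set.Ioi (x/2), (μ {a | s < f N a}).toReal := by
    have := integral_comp_add_right_Ioi' (fun s => (μ {a | s < f N a}).toReal) 0 (x/2)
    simpa using this
  have hstep3 : ∫ u in Set.Ioi (1:ℝ), (μ {a | (x/2) * u < f N a}).toReal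
      = (x/2)⁻¹ * ∫ s in Set.Ioi (x/2), (μ {a | s < f N a}).toReal := by
    have := integral_comp_mul_left_Ioi (fun s => (μ {a | s < f N a}).toReal) 1 (half_pos hx)
    simpa [smul_eq_mul] using this
  -- identify RHS integrand
  have hRHSint : ∀ u : ℝ, {ω | ∃ i' ∈ Finset.Icc (1 : Fin e → ℤ) (Fin.init n),
      x * u / 2 < |∑ j ∈ Finset.Icc 1 (Fin.snoc i' (n (Fin.last e)) : Fin (e + 1) → ℤ), X j ω|}
      = {a | (x/2) * u < f N a} := by
    intro u
    ext ω
    simp only [Set.mem_setOf_eq, hfdef, Finset.lt_sup'_iff, hkapN]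
    constructor
    · rintro ⟨i', hi', h⟩; exact ⟨i', hi', by linarith⟩
    · rintro ⟨i', hi', h⟩; exact ⟨i', hi', by linarith⟩
  have hRHSeq : (∫ u in Set.Ioi (1 : ℝ),
      (μ {ω | ∃ i' ∈ Finset.Icc (1 : Fin e → ℤ) (Fin.init n),
        x * u / 2 < |∑ j ∈ Finset.Icc 1 (Fin.snoc i' (n (Fin.last e)) : Fin (e + 1) → ℤ),
          X j ω|}).toReal)
      = ∫ u in Set.Ioi (1:ℝ), (μ {a | (x/2) * u < f N a}).toReal := by
    refine setIntegral_congr_fun measurableSet_Ioi fun u _ => ?_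
    rw [hRHSint u]
  -- final chain
  have hZA : ∫ ω in A, (f N ω - x/2) ∂μ ≤ ∫ ω, Z ω ∂μ := by
    refine le_trans (setIntegral_mono_on
      (hYint.integrableOn.sub hIntConst.integrableOn) hZint.integrableOn hAmeas
      fun ω _ => le_max_left _ _) (setIntegral_le_integral hZint hZnn)
  have hsubint : ∫ ω in A, (f N ω - x/2) ∂μ
      = (∫ ω in A, f N ω ∂μ) - (x/2) * (μ A).toReal := by
    rw [integral_sub hYint.integrableOn hIntConst.integrableOn, setIntegral_const,
      smul_eq_mul, mul_comm]; rfl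
  have hmain : (μ A).toReal ≤ (x/2)⁻¹ * ∫ ω, Z ω ∂μ := by
    have h1 : (x/2) * (μ A).toReal ≤ ∫ ω, Z ω ∂μ := by
      rw [hsubint] at hZA
      linarith
    have h2 : (0:ℝ) < x/2 := half_pos hx
    rw [inv_mul_eq_div, le_div_iff₀ h2]
    linarith
  calc (μ {ω | ∃ i ∈ Finset.Icc (1 : Fin (e + 1) → ℤ) n,
        x < |∑ j ∈ Finset.Icc 1 i, X j ω|}).toReal
      ≤ (μ A).toReal := ENNReal.toReal_mono (measure_ne_top μ A) (measure_mono hEA)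
    _ ≤ (x/2)⁻¹ * ∫ ω, Z ω ∂μ := hmain
    _ = ∫ u in Set.Ioi (1:ℝ), (μ {a | (x/2) * u < f N a}).toReal := by
        rw [hlayer, hstep1, hstep2, hstep3]
    _ = _ := hRHSeq.symm
end

section
/- Let d ≥ 2 and let (X_i)_{i∈ℤ^d} be an orthomartingale difference random field with respect to a commuting filtration (F_i)_{i∈ℤ^d} satisfying the sum-invariance condition. Fix n_d ≥ 1 and define, for i' = (i_1,…,i_{d−1}) ∈ ℤ^{d−1}, X'_{i'} := Σ_{i_d=1}^{n_d} X_{(i_1,…,i_{d−1},i_d)} and G_{i'} := F_{(i_1,…,i_{d−1},n_d)}. Then (X'_{i'})_{i'∈ℤ^{d−1}} is an orthomartingale difference random field with respect to the commuting filtration (G_{i'})_{i'∈ℤ^{d−1}}, and it satisfies the sum-invariance condition in dimension d−1. -/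
open MeasureTheory ProbabilityTheory

/-- The sum-invariance condition: for every `n` and every `k ∈ ℤ^d`, the sums
`∑_{1 ≼ i ≼ n} X i` and `∑_{1 ≼ i ≼ n} X (i + k)` have the same distribution. -/
def SumInvariant {Ω : Type*} [MeasurableSpace Ω] (μ : Measure Ω)
    {d : ℕ} (X : (Fin d → ℤ) → Ω → ℝ) : Prop :=
  ∀ n k : Fin d → ℤ,
    IdentDistrib (fun ω => ∑ i ∈ Finset.Icc 1 n, X i ω)
      (fun ω => ∑ i ∈ Finset.Icc 1 n, X (i + k) ω) μ μ


lemma snoc_le_snoc'_s8 {e : ℕ} {i j : Fin e → ℤ} {a b : ℤ} (h : i ≤ j) (hab : a ≤ b) :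
    (Fin.snoc i a : Fin (e+1) → ℤ) ≤ Fin.snoc j b := by
  intro q
  refine Fin.lastCases ?_ ?_ q
  · simpa using hab
  · intro p; simpa using h p

lemma min_snoc {e : ℕ} (i j : Fin e → ℤ) (a b : ℤ) :
    (fun q => min ((Fin.snoc i a : Fin (e+1) → ℤ) q) ((Fin.snoc j b : Fin (e+1) → ℤ) q))
      = Fin.snoc (fun p => min (i p) (j p)) (min a b) := by
  funext q
  refine Fin.lastCases ?_ ?_ q <;> simp

lemma snoc_sub_single {e : ℕ} (i : Fin e → ℤ) (a : ℤ) (q : Fin e) :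
    (Fin.snoc i a : Fin (e+1) → ℤ) - Pi.single q.castSucc 1
      = Fin.snoc (i - Pi.single q 1) a := by
  funext p
  refine Fin.lastCases ?_ ?_ p
  · have : Pi.single (M := fun _ : Fin (e+1) => ℤ) q.castSucc 1 (Fin.last e) = 0 :=
      Pi.single_eq_of_ne (Fin.castSucc_lt_last q).ne' 1
    simp [Pi.sub_apply, this]
  · intro p
    simp only [Pi.sub_apply, Fin.snoc_castSucc]
    congr 1
    by_cases hpq : p = q
    · subst hpq; simp
    · rw [Pi.single_eq_of_ne hpq, Pi.single_eq_of_ne (fun h => hpq (Fin.castSucc_injective _ h))]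

lemma sum_snoc_Icc {e : ℕ} (n' : Fin e → ℤ) (nd : ℤ) (f : (Fin (e+1) → ℤ) → ℝ) :
    ∑ i ∈ Finset.Icc (1 : Fin (e+1) → ℤ) (Fin.snoc n' nd),
        f i
      = ∑ i' ∈ Finset.Icc (1 : Fin e → ℤ) n', ∑ id ∈ Finset.Icc (1:ℤ) nd,
        f (Fin.snoc i' id) := by
  rw [← Finset.sum_product']
  refine Finset.sum_nbij' (fun i => (Fin.init i, i (Fin.last e)))
    (fun p => Fin.snoc p.1 p.2) ?_ ?_ ?_ ?_ ?_
  · intro i hi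
    rw [Finset.mem_Icc] at hi
    simp only [Finset.mem_product, Finset.mem_Icc]
    refine ⟨⟨fun p => ?_, fun p => ?_⟩, ?_, ?_⟩
    · simpa [Fin.init] using hi.1 p.castSucc
    · simpa [Fin.init] using hi.2 p.castSucc
    · simpa using hi.1 (Fin.last e)
    · simpa using hi.2 (Fin.last e)
  · intro p hp
    simp only [Finset.mem_product, Finset.mem_Icc] at hp
    rw [Finset.mem_Icc]
    constructor
    · intro q; refine Fin.lastCases ?_ ?_ q
      · simpa using hp.2.1
      · intro r; simpa using hp.1.1 r
    · exact snoc_le_snoc'_s8 hp.1.2 hp.2.2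
  · intro i _; exact Fin.snoc_init_self i
  · intro p _; simp
  · intro i _; rw [Fin.snoc_init_self]
/-- Induction step: let `d = e + 1 ≥ 2`, let `(X_i)_{i∈ℤ^d}` be an orthomartingale
difference random field with respect to a commuting filtration `(F_i)` satisfying
the sum-invariance condition, and fix `n_d ≥ 1`. Then the field
`X'_{i'} = ∑_{i_d=1}^{n_d} X_{(i',i_d)}`, `i' ∈ ℤ^{d-1}`, is an orthomartingale
difference random field with respect to the commuting filtration
`G_{i'} = F_{(i',n_d)}`, and it satisfies the sum-invariance condition in
dimension `d - 1`. -/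
theorem blocked_field_orthomartingale (e : ℕ) (he : 1 ≤ e)
    {Ω : Type*} {m0 : MeasurableSpace Ω} (μ : Measure Ω) [IsProbabilityMeasure μ]
    (F : (Fin (e + 1) → ℤ) → MeasurableSpace Ω) (X : (Fin (e + 1) → ℤ) → Ω → ℝ)
    (hF : CommutingFiltration μ F) (hX : OrthomartingaleDiff μ F X)
    (hinv : SumInvariant μ X)
    (nd : ℤ) (hnd : 1 ≤ nd)
    (X' : (Fin e → ℤ) → Ω → ℝ)
    (hX' : ∀ (i' : Fin e → ℤ) (ω : Ω), X' i' ω =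
      ∑ id ∈ Finset.Icc 1 nd, X (Fin.snoc i' id) ω)
    (G : (Fin e → ℤ) → MeasurableSpace Ω)
    (hG : ∀ i' : Fin e → ℤ, G i' = F (Fin.snoc i' nd)) :
    CommutingFiltration μ G ∧ OrthomartingaleDiff μ G X' ∧ SumInvariant μ X' := by
  obtain ⟨hFle, hFmono, hFcomm⟩ := hF
  obtain ⟨hXint, hXmeas, hXmd⟩ := hX
  have hX'eq : ∀ i' : Fin e → ℤ, X' i' = fun ω => ∑ id ∈ Finset.Icc 1 nd,
      X (Fin.snoc i' id) ω := fun i' => funext (hX' i')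
  refine ⟨⟨fun i' => by rw [hG]; exact hFle _,
      fun i' j' h => by rw [hG, hG]; exact hFmono _ _ (snoc_le_snoc'_s8 h le_rfl), ?_⟩,
      ⟨?_, ?_, ?_⟩, ?_⟩
  · -- commuting
    intro Y hY i' j'
    rw [hG, hG, hG]
    have := hFcomm Y hY (Fin.snoc i' nd) (Fin.snoc j' nd)
    rwa [min_snoc, min_self] at this
  · -- integrable
    intro i'
    rw [hX'eq i']
    exact integrable_finset_sum _ fun id _ => hXint _
  · -- measurable
    intro i'
    rw [hX'eq i', hG]
    refine Finset.stronglyMeasurable_fun_sum _ fun id hid => ?_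
    exact (hXmeas _).mono (hFmono _ _
      (snoc_le_snoc'_s8 le_rfl (Finset.mem_Icc.1 hid).2))
  · -- martingale differences
    intro i' q
    rw [hX'eq i', hG]
    set B : Fin (e+1) → ℤ := Fin.snoc (i' - Pi.single q 1) nd with hB
    have hterm : ∀ id ∈ Finset.Icc (1:ℤ) nd,
        μ[X (Fin.snoc i' id) | F B] =ᵐ[μ] 0 := by
      intro id hid
      set j : Fin (e+1) → ℤ := Fin.snoc i' id with hj
      set A : Fin (e+1) → ℤ := Fin.snoc (i' - Pi.single q 1) id with hA
      have hmin : (fun p => min (j p) (B p)) = A := by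
        funext p
        refine Fin.lastCases ?_ ?_ p
        · simp only [hj, hB, hA, Fin.snoc_last]
          exact min_eq_left (Finset.mem_Icc.1 hid).2
        · intro r
          simp only [hj, hB, hA, Fin.snoc_castSucc]
          refine min_eq_right ?_
          simp only [Pi.sub_apply]
          have h0 : (0:ℤ) ≤ (Pi.single q 1 : Fin e → ℤ) r := by
            rcases eq_or_ne r q with h|h
            · subst h; simp
            · simp [Pi.single_eq_of_ne h]
          omega
      have h1 : μ[X j | F j] = X j :=
        condExp_of_stronglyMeasurable (hFle j) (hXmeas j) (hXint j)
      have h2 := hFcomm (X j) (hXint j) j B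
      rw [h1, hmin] at h2
      refine h2.trans ?_
      have := hXmd j q.castSucc
      rwa [hj, snoc_sub_single, ← hA] at this
    have hsum := condExp_finset_sum (m := F B) (μ := μ)
      (f := fun id => X (Fin.snoc i' id)) (s := Finset.Icc (1:ℤ) nd)
      (fun id _ => hXint _)
    have hfun : (fun ω => ∑ id ∈ Finset.Icc 1 nd, X (Fin.snoc i' id) ω)
        = ∑ id ∈ Finset.Icc 1 nd, X (Fin.snoc i' id) := by
      funext ω; rw [Finset.sum_apply]
    rw [hfun]
    refine hsum.trans ?_
    have : ∀ᵐ ω ∂μ, ∀ id ∈ Finset.Icc (1:ℤ) nd,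
        (μ[X (Fin.snoc i' id) | F B]) ω = 0 :=
      (ae_ball_iff (Finset.Icc (1:ℤ) nd).countable_toSet).2 hterm
    filter_upwards [this] with ω hω
    simp only [Finset.sum_apply, Pi.zero_apply]
    exact Finset.sum_eq_zero hω
  · -- sum invariance
    intro n' k'
    have key := hinv (Fin.snoc n' nd) (Fin.snoc k' 0)
    have e1 : (fun ω => ∑ i ∈ Finset.Icc 1 (Fin.snoc n' nd : Fin (e+1) → ℤ), X i ω)
        = fun ω => ∑ i' ∈ Finset.Icc 1 n', X' i' ω := by
      funext ω
      rw [sum_snoc_Icc n' nd (fun i => X i ω)]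
      exact Finset.sum_congr rfl fun i' _ => (hX' i' ω).symm
    have e2 : (fun ω => ∑ i ∈ Finset.Icc 1 (Fin.snoc n' nd : Fin (e+1) → ℤ),
          X (i + Fin.snoc k' 0) ω)
        = fun ω => ∑ i' ∈ Finset.Icc 1 n', X' (i' + k') ω := by
      funext ω
      refine Eq.trans (sum_snoc_Icc n' nd (fun i => X (i + Fin.snoc k' 0) ω)) ?_
      refine Finset.sum_congr rfl fun i' _ => ?_
      rw [hX']
      refine Finset.sum_congr rfl fun id _ => ?_
      congr 1
      funext p
      refine Fin.lastCases ?_ ?_ p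
      · simp
      · intro r; simp
    rwa [e1, e2] at key
end

section
/- Let L : (0,∞) → (0,∞) be a measurable slowly varying function, i.e. for every c > 0, L(ct)/L(t) → 1 as t → ∞. Then there exists a constant C_L > 0 such that for every integer k ≥ 1, Σ_{j=1}^k 2^j / L(2^j) ≤ C_L · 2^k / L(2^k). -/
/-- If `L : (0,∞) → (0,∞)` is a measurable slowly varying function, then there is a
constant `C_L > 0` such that for every `k ≥ 1`,
`∑_{j=1}^k 2^j / L(2^j) ≤ C_L · 2^k / L(2^k)`. -/
theorem slowly_varying_geometric_sum_bound (L : ℝ → ℝ) (hLmeas : Measurable L)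
    (hLpos : ∀ t : ℝ, 0 < t → 0 < L t)
    (hslow : ∀ c : ℝ, 0 < c →
      Filter.Tendsto (fun t : ℝ => L (c * t) / L t) Filter.atTop (nhds 1)) :
    ∃ C : ℝ, 0 < C ∧ ∀ k : ℕ, 1 ≤ k →
      ∑ j ∈ Finset.Icc 1 k, (2 : ℝ) ^ j / L (2 ^ j) ≤ C * ((2 : ℝ) ^ k / L (2 ^ k)) := by
  classical
  set a : ℕ → ℝ := fun j => (2 : ℝ) ^ j / L (2 ^ j) with ha
  have hpow : ∀ j : ℕ, (0 : ℝ) < 2 ^ j := fun j => by positivity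
  have hapos : ∀ j, 0 < a j := fun j => div_pos (hpow j) (hLpos _ (hpow j))
  -- eventual ratio bound
  have h32 : ∀ᶠ t in Filter.atTop, L (2 * t) / L t < 3 / 2 :=
    (hslow 2 two_pos).eventually_lt_const (by norm_num)
  obtain ⟨T, hT⟩ := Filter.eventually_atTop.mp h32
  obtain ⟨N₀, hN₀⟩ := pow_unbounded_of_one_lt T (by norm_num : (1 : ℝ) < 2)
  set N := N₀ + 1 with hNdef
  have hNge : 1 ≤ N := Nat.le_add_left 1 N₀
  have hstep : ∀ j, N ≤ j → a j ≤ (3 / 4) * a (j + 1) := by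
    intro j hj
    have h2j : T ≤ (2 : ℝ) ^ j :=
      le_trans (le_of_lt hN₀) (pow_le_pow_right₀ (by norm_num) (by omega))
    have hlt := hT _ h2j
    have hLj := hLpos _ (hpow j)
    have hLj1 := hLpos _ (hpow (j + 1))
    have h2 : (2 : ℝ) * 2 ^ j = 2 ^ (j + 1) := by ring
    rw [h2] at hlt
    have hL : L (2 ^ (j + 1)) < 3 / 2 * L (2 ^ j) := by
      rw [div_lt_iff₀ hLj] at hlt; linarith
    show (2 : ℝ) ^ j / L (2 ^ j) ≤ 3 / 4 * ((2 : ℝ) ^ (j + 1) / L (2 ^ (j + 1)))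
    rw [← mul_div_assoc, div_le_div_iff₀ hLj hLj1]
    have hps : (2 : ℝ) ^ (j + 1) = 2 ^ j * 2 := pow_succ 2 j
    nlinarith [hpow j, hpow (j + 1)]
  -- tail sum bound by induction
  have hsum : ∀ k, N ≤ k → ∑ j ∈ Finset.Icc N k, a j ≤ 4 * a k := by
    intro k
    induction k with
    | zero => intro h; omega
    | succ k ih =>
      intro hk
      rcases Nat.lt_or_ge k N with h | h
      · have hEq : N = k + 1 := by omega
        rw [hEq, Finset.Icc_self, Finset.sum_singleton]
        linarith [hapos (k + 1)]
      · have hsum' := ih h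
        rw [Finset.sum_Icc_succ_top (by omega : N ≤ k + 1)]
        have hst := hstep k h
        linarith [hapos (k + 1)]
  -- monotone lower bound
  have hlow : ∀ k, N ≤ k → a N ≤ a k := by
    intro k
    induction k with
    | zero => intro h; omega
    | succ k ih =>
      intro hk
      rcases Nat.lt_or_ge k N with h | h
      · have hEq : N = k + 1 := by omega
        rw [hEq]
      · have := ih h
        have hst := hstep k h
        have := hapos (k + 1)
        linarith
  set S : ℝ := ∑ j ∈ Finset.Icc 1 (N - 1), a j with hS
  set S' : ℝ := ∑ j ∈ Finset.Icc 1 N, a j with hS'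
  have hSnn : 0 ≤ S := Finset.sum_nonneg fun j _ => (hapos j).le
  have hS'nn : 0 ≤ S' := Finset.sum_nonneg fun j _ => (hapos j).le
  have hNE : (Finset.Icc 1 N).Nonempty := ⟨1, Finset.mem_Icc.mpr ⟨le_refl 1, hNge⟩⟩
  set m : ℝ := (Finset.Icc 1 N).inf' hNE a with hm
  have hmpos : 0 < m := by
    rw [hm, Finset.lt_inf'_iff]
    intro j _; exact hapos j
  have hma : ∀ k, 1 ≤ k → k ≤ N → m ≤ a k := fun k h1 h2 =>
    Finset.inf'_le a (Finset.mem_Icc.mpr ⟨h1, h2⟩)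
  have hd1 : 0 ≤ S / a N := div_nonneg hSnn (hapos N).le
  have hd2 : 0 ≤ S' / m := div_nonneg hS'nn hmpos.le
  refine ⟨S / a N + 4 + S' / m, by linarith, ?_⟩
  intro k hk
  show ∑ j ∈ Finset.Icc 1 k, a j ≤ (S / a N + 4 + S' / m) * a k
  have hak := hapos k
  rcases le_or_gt N k with hNk | hNk
  · -- split sum
    have hsplit : ∑ j ∈ Finset.Icc 1 k, a j = S + ∑ j ∈ Finset.Icc N k, a j := by
      rw [hS]
      have e1 : Finset.Icc 1 k = Finset.Ioc 0 k := Finset.Icc_add_one_left_eq_Ioc 0 k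
      have e2 : Finset.Icc 1 (N - 1) = Finset.Ioc 0 (N - 1) := Finset.Icc_add_one_left_eq_Ioc 0 (N - 1)
      have e3 : Finset.Icc N k = Finset.Ioc (N - 1) k := by
        rw [← Finset.Icc_add_one_left_eq_Ioc]
        congr 1
      rw [e1, e2, e3, Finset.sum_Ioc_consecutive _ (Nat.zero_le _) (by omega : N - 1 ≤ k)]
    rw [hsplit]
    have h1 := hsum k hNk
    have h2 : S ≤ S / a N * a k :=
      calc S = S / a N * a N := (div_mul_cancel₀ S (hapos N).ne').symm
        _ ≤ S / a N * a k := mul_le_mul_of_nonneg_left (hlow k hNk) hd1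
    have h3 : 0 ≤ S' / m * a k := mul_nonneg hd2 hak.le
    nlinarith
  · -- small k
    have hsub : ∑ j ∈ Finset.Icc 1 k, a j ≤ S' := by
      rw [hS']
      exact Finset.sum_le_sum_of_subset_of_nonneg
        (Finset.Icc_subset_Icc_right (by omega)) (fun j _ _ => (hapos j).le)
    have h2 : S' ≤ S' / m * a k :=
      calc S' = S' / m * m := (div_mul_cancel₀ S' hmpos.ne').symm
        _ ≤ S' / m * a k := mul_le_mul_of_nonneg_left (hma k hk (by omega)) hd2
    have h3 : 0 ≤ (S / a N + 4) * a k := mul_nonneg (by linarith) hak.le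
    nlinarith
end

section
/- Let X be a nonnegative random variable and let L : (0,∞) → (0,∞) be a measurable, nondecreasing slowly varying function with L(x) → ∞ as x → ∞. Suppose that for every A > 0, Σ_{j≥1} 2^j P( X > L(2^j) A ) < ∞. Then for every C > 0, Σ_{j≥1} 2^j ∫_1^∞ P( X > L(2^j) u C ) u² du < ∞. -/
open MeasureTheory
open scoped ENNReal

/-- Dyadic cover of `(1,∞)`. -/
lemma svt_cover : Set.Ioi (1:ℝ) ⊆ ⋃ k : ℕ, Set.Ioc ((2:ℝ)^k) ((2:ℝ)^(k+1)) := by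
  intro u hu
  have hu1 : (1:ℝ) < u := hu
  have hex : ∃ n : ℕ, u ≤ 2 ^ (n+1) := by
    obtain ⟨n, hn⟩ := pow_unbounded_of_one_lt u (by norm_num : (1:ℝ) < 2)
    exact ⟨n, le_of_lt (hn.trans_le (pow_le_pow_right₀ one_le_two (Nat.le_succ n)))⟩
  classical
  let n := Nat.find hex
  have h1 : u ≤ 2 ^ (n+1) := Nat.find_spec hex
  have h2 : (2:ℝ)^n < u := by
    rcases Nat.eq_zero_or_pos n with h | h
    · simpa [h] using hu1
    · have hlt := Nat.find_min hex (m := n - 1) (Nat.sub_lt h one_pos)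
      push_neg at hlt
      have hne : n - 1 + 1 = n := by omega
      rwa [hne] at hlt
  exact Set.mem_iUnion.2 ⟨n, h2, h1⟩

/-- Let `X ≥ 0` be a random variable and `L : (0,∞) → (0,∞)` a measurable,
nondecreasing slowly varying function with `L(x) → ∞`. If for every `A > 0`,
`∑_{j≥1} 2^j P(X > L(2^j) A) < ∞`, then for every `C > 0`,
`∑_{j≥1} 2^j ∫_1^∞ P(X > L(2^j) u C) u² du < ∞`. -/
theorem slowly_varying_tail_series_integral
    {Ω : Type*} {m0 : MeasurableSpace Ω} (μ : Measure Ω) [IsProbabilityMeasure μ]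
    (X : Ω → ℝ) (hXnonneg : ∀ ω, 0 ≤ X ω) (hXmeas : Measurable X)
    (L : ℝ → ℝ) (hLmeas : Measurable L)
    (hLpos : ∀ t : ℝ, 0 < t → 0 < L t)
    (hLmono : MonotoneOn L (Set.Ioi (0 : ℝ)))
    (hLtop : Filter.Tendsto L Filter.atTop Filter.atTop)
    (hslow : ∀ c : ℝ, 0 < c →
      Filter.Tendsto (fun t : ℝ => L (c * t) / L t) Filter.atTop (nhds 1))
    (hsum : ∀ A : ℝ, 0 < A →
      (∑' j : ℕ, (2 : ℝ≥0∞) ^ (j + 1) *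
        μ {ω | L (2 ^ (j + 1)) * A < X ω}) ≠ ⊤) :
    ∀ C : ℝ, 0 < C →
      (∑' j : ℕ, (2 : ℝ≥0∞) ^ (j + 1) *
        ∫⁻ u in Set.Ioi (1 : ℝ),
          μ {ω | L (2 ^ (j + 1)) * u * C < X ω} * ENNReal.ofReal (u ^ 2)) ≠ ⊤ := by
  intro C hC
  -- positivity of L at powers of two
  have hpow_pos : ∀ n : ℕ, (0:ℝ) < 2 ^ n := fun n => by positivity
  have hLp : ∀ n : ℕ, 0 < L (2 ^ n) := fun n => hLpos _ (hpow_pos n)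
  -- slow variation: eventually L(2t) ≤ 1.1 * L t
  have hev : ∀ᶠ t in Filter.atTop, L (2 * t) / L t < 1.1 :=
    (hslow 2 two_pos).eventually (gt_mem_nhds (by norm_num : (1:ℝ) < 1.1))
  obtain ⟨t₀, ht₀⟩ := Filter.eventually_atTop.mp hev
  set t₁ : ℝ := max t₀ 1 with ht₁def
  have ht₁pos : (0:ℝ) < t₁ := lt_of_lt_of_le one_pos (le_max_right _ _)
  have hstep : ∀ t : ℝ, t₁ ≤ t → L (2 * t) ≤ 1.1 * L t := by
    intro t ht
    have htpos : 0 < t := lt_of_lt_of_le ht₁pos ht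
    have h1 : L (2 * t) / L t < 1.1 := ht₀ t (le_trans (le_max_left _ _) ht)
    have h2 : 0 < L t := hLpos t htpos
    calc L (2 * t) = L (2 * t) / L t * L t := by field_simp
      _ ≤ 1.1 * L t := by nlinarith
  obtain ⟨j₀, hj₀⟩ : ∃ j₀ : ℕ, t₁ ≤ 2 ^ (j₀ + 1) := by
    obtain ⟨n, hn⟩ := pow_unbounded_of_one_lt t₁ (by norm_num : (1:ℝ) < 2)
    exact ⟨n, le_of_lt (hn.trans_le (pow_le_pow_right₀ one_le_two (Nat.le_succ n)))⟩
  -- iterated doubling for j ≥ j₀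
  have hiter : ∀ n : ℕ, ∀ j : ℕ, j₀ ≤ j → L (2 ^ (j + 1 + n)) ≤ 1.1 ^ n * L (2 ^ (j + 1)) := by
    intro n
    induction n with
    | zero => intro j _; simp
    | succ n ih =>
      intro j hj
      have hmono2 : (2:ℝ) ^ (j₀ + 1) ≤ 2 ^ (j + 1 + n) :=
        pow_le_pow_right₀ one_le_two (by omega)
      have ht : t₁ ≤ 2 ^ (j + 1 + n) := le_trans hj₀ hmono2
      have h1 : (2:ℝ) ^ (j + 1 + (n + 1)) = 2 * 2 ^ (j + 1 + n) := by ring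
      calc L (2 ^ (j + 1 + (n + 1))) = L (2 * 2 ^ (j + 1 + n)) := by rw [h1]
        _ ≤ 1.1 * L (2 ^ (j + 1 + n)) := hstep _ ht
        _ ≤ 1.1 * (1.1 ^ n * L (2 ^ (j + 1))) := by
            have := ih j hj; nlinarith
        _ = 1.1 ^ (n + 1) * L (2 ^ (j + 1)) := by ring
  have hpow4 : ∀ k : ℕ, (1.1:ℝ) ^ (4 * k) ≤ 2 ^ k := by
    intro k
    calc (1.1:ℝ) ^ (4 * k) = ((1.1:ℝ) ^ 4) ^ k := by rw [pow_mul]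
      _ ≤ 2 ^ k := pow_le_pow_left₀ (by positivity) (by norm_num) k
  -- the constant D
  set D : ℝ := L (2 ^ (j₀ + 1)) / L 2 with hDdef
  have hL2 : (0:ℝ) < L 2 := hLpos 2 two_pos
  have hL2le : ∀ j : ℕ, L 2 ≤ L (2 ^ (j + 1)) := by
    intro j
    exact hLmono (by norm_num) (hpow_pos (j+1)) (by
      calc (2:ℝ) = 2 ^ 1 := (pow_one 2).symm
        _ ≤ 2 ^ (j + 1) := pow_le_pow_right₀ one_le_two (by omega))
  have hD1 : 1 ≤ D := by
    rw [hDdef, le_div_iff₀ hL2]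
    simpa using hL2le j₀
  have hDpos : 0 < D := lt_of_lt_of_le one_pos hD1
  -- key growth bound
  have hkey : ∀ j k : ℕ, L (2 ^ (j + 4 * k + 1)) ≤ D * (2 ^ k * L (2 ^ (j + 1))) := by
    intro j k
    rcases le_or_gt j₀ j with hj | hj
    · have h1 : L (2 ^ (j + 4 * k + 1)) = L (2 ^ (j + 1 + 4 * k)) := by ring_nf
      have h2 : L (2 ^ (j + 1 + 4 * k)) ≤ 1.1 ^ (4 * k) * L (2 ^ (j + 1)) := hiter (4 * k) j hj
      have h3 := hpow4 k
      have h4 := (hLp (j + 1)).le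
      calc L (2 ^ (j + 4 * k + 1)) = L (2 ^ (j + 1 + 4 * k)) := h1
        _ ≤ 1.1 ^ (4 * k) * L (2 ^ (j + 1)) := h2
        _ ≤ 2 ^ k * L (2 ^ (j + 1)) := mul_le_mul_of_nonneg_right h3 h4
        _ ≤ D * (2 ^ k * L (2 ^ (j + 1))) :=
            le_mul_of_one_le_left (mul_nonneg (pow_nonneg (by norm_num) k) h4) hD1
    · have h1 : L (2 ^ (j + 4 * k + 1)) ≤ L (2 ^ (j₀ + 4 * k + 1)) :=
        hLmono (hpow_pos _) (hpow_pos _) (pow_le_pow_right₀ one_le_two (by omega))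
      have h2 : L (2 ^ (j₀ + 4 * k + 1)) ≤ 1.1 ^ (4 * k) * L (2 ^ (j₀ + 1)) := by
        have := hiter (4 * k) j₀ le_rfl
        have he : j₀ + 4 * k + 1 = j₀ + 1 + 4 * k := by omega
        rw [he]; exact this
      have h3 : L (2 ^ (j₀ + 1)) = D * L 2 := by
        rw [hDdef]; field_simp
      have h4 := hL2le j
      have h5 := hpow4 k
      have hLj₀ := (hLp (j₀ + 1)).le
      calc L (2 ^ (j + 4 * k + 1)) ≤ L (2 ^ (j₀ + 4 * k + 1)) := h1
        _ ≤ 1.1 ^ (4 * k) * L (2 ^ (j₀ + 1)) := h2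
        _ ≤ 2 ^ k * L (2 ^ (j₀ + 1)) := mul_le_mul_of_nonneg_right h5 hLj₀
        _ = 2 ^ k * (D * L 2) := by rw [← h3]
        _ ≤ 2 ^ k * (D * L (2 ^ (j + 1))) := by
            refine mul_le_mul_of_nonneg_left ?_ (pow_nonneg (by norm_num) k)
            exact mul_le_mul_of_nonneg_left h4 hDpos.le
        _ = D * (2 ^ k * L (2 ^ (j + 1))) := by ring
  set A : ℝ := C / D with hAdef
  have hA : 0 < A := div_pos hC hDpos
  have hDA : D * A = C := by rw [hAdef]; field_simp
  -- threshold comparison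
  have hthresh : ∀ j k : ℕ, L (2 ^ (j + 4 * k + 1)) * A ≤ L (2 ^ (j + 1)) * 2 ^ k * C := by
    intro j k
    have h1 := hkey j k
    calc L (2 ^ (j + 4 * k + 1)) * A ≤ D * (2 ^ k * L (2 ^ (j + 1))) * A :=
          mul_le_mul_of_nonneg_right h1 hA.le
      _ = L (2 ^ (j + 1)) * 2 ^ k * (D * A) := by ring
      _ = L (2 ^ (j + 1)) * 2 ^ k * C := by rw [hDA]
  have hP : ∀ j k : ℕ,
      μ {ω | L (2 ^ (j + 1)) * (2:ℝ) ^ k * C < X ω}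
        ≤ μ {ω | L (2 ^ (j + 4 * k + 1)) * A < X ω} :=
    fun j k => measure_mono (fun ω hω => lt_of_le_of_lt (hthresh j k) hω)
  -- integral bound via dyadic decomposition
  have hint : ∀ j : ℕ,
      (∫⁻ u in Set.Ioi (1:ℝ),
          μ {ω | L (2 ^ (j + 1)) * u * C < X ω} * ENNReal.ofReal (u ^ 2))
        ≤ ∑' k : ℕ, (2:ℝ≥0∞) ^ (3 * k + 2) *
            μ {ω | L (2 ^ (j + 1)) * (2:ℝ) ^ k * C < X ω} := by
    intro j
    have hLjC : 0 < L (2 ^ (j + 1)) * C := mul_pos (hLp (j+1)) hC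
    calc (∫⁻ u in Set.Ioi (1:ℝ),
            μ {ω | L (2 ^ (j + 1)) * u * C < X ω} * ENNReal.ofReal (u ^ 2))
        ≤ ∫⁻ u in ⋃ k : ℕ, Set.Ioc ((2:ℝ)^k) ((2:ℝ)^(k+1)),
            μ {ω | L (2 ^ (j + 1)) * u * C < X ω} * ENNReal.ofReal (u ^ 2) :=
          lintegral_mono_set svt_cover
      _ ≤ ∑' k : ℕ, ∫⁻ u in Set.Ioc ((2:ℝ)^k) ((2:ℝ)^(k+1)),
            μ {ω | L (2 ^ (j + 1)) * u * C < X ω} * ENNReal.ofReal (u ^ 2) :=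
          lintegral_iUnion_le _ _
      _ ≤ ∑' k : ℕ, (2:ℝ≥0∞) ^ (3 * k + 2) *
            μ {ω | L (2 ^ (j + 1)) * (2:ℝ) ^ k * C < X ω} := by
          refine ENNReal.tsum_le_tsum fun k => ?_
          have hb : ∀ u ∈ Set.Ioc ((2:ℝ)^k) ((2:ℝ)^(k+1)),
              μ {ω | L (2 ^ (j + 1)) * u * C < X ω} * ENNReal.ofReal (u ^ 2)
                ≤ μ {ω | L (2 ^ (j + 1)) * (2:ℝ) ^ k * C < X ω}
                    * ENNReal.ofReal (((2:ℝ) ^ (k+1)) ^ 2) := by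
            intro u hu
            refine mul_le_mul' ?_ ?_
            · refine measure_mono fun ω hω => ?_
              have hω' : L (2 ^ (j + 1)) * u * C < X ω := hω
              show L (2 ^ (j + 1)) * (2:ℝ) ^ k * C < X ω
              have h2u : (2:ℝ)^k ≤ u := hu.1.le
              nlinarith [hLp (j+1)]
            · exact ENNReal.ofReal_le_ofReal (by
                have h1 : 0 < u := lt_trans (hpow_pos k) hu.1
                nlinarith [hu.2, hpow_pos (k+1)])
          calc (∫⁻ u in Set.Ioc ((2:ℝ)^k) ((2:ℝ)^(k+1)),
                  μ {ω | L (2 ^ (j + 1)) * u * C < X ω} * ENNReal.ofReal (u ^ 2))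
              ≤ ∫⁻ _ in Set.Ioc ((2:ℝ)^k) ((2:ℝ)^(k+1)),
                  μ {ω | L (2 ^ (j + 1)) * (2:ℝ) ^ k * C < X ω}
                    * ENNReal.ofReal (((2:ℝ) ^ (k+1)) ^ 2) :=
                setLIntegral_mono measurable_const hb
            _ = μ {ω | L (2 ^ (j + 1)) * (2:ℝ) ^ k * C < X ω}
                  * ENNReal.ofReal (((2:ℝ) ^ (k+1)) ^ 2)
                  * volume (Set.Ioc ((2:ℝ)^k) ((2:ℝ)^(k+1))) := setLIntegral_const _ _
            _ ≤ (2:ℝ≥0∞) ^ (3 * k + 2) *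
                  μ {ω | L (2 ^ (j + 1)) * (2:ℝ) ^ k * C < X ω} := by
                rw [Real.volume_Ioc]
                have h1 : ENNReal.ofReal (((2:ℝ) ^ (k+1)) ^ 2) = (2:ℝ≥0∞) ^ (2 * k + 2) := by
                  rw [show ((2:ℝ) ^ (k+1)) ^ 2 = 2 ^ (2 * k + 2) by ring,
                    ENNReal.ofReal_pow (by norm_num)]
                  norm_num
                have h2 : ENNReal.ofReal ((2:ℝ) ^ (k+1) - 2 ^ k) ≤ (2:ℝ≥0∞) ^ k := by
                  calc ENNReal.ofReal ((2:ℝ) ^ (k+1) - 2 ^ k)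
                      ≤ ENNReal.ofReal ((2:ℝ) ^ k) :=
                        ENNReal.ofReal_le_ofReal (by nlinarith [hpow_pos k, pow_succ (2:ℝ) k])
                    _ = (2:ℝ≥0∞) ^ k := by
                        rw [ENNReal.ofReal_pow (by norm_num)]; norm_num
                rw [h1]
                calc μ _ * (2:ℝ≥0∞) ^ (2 * k + 2) * ENNReal.ofReal ((2:ℝ) ^ (k+1) - 2 ^ k)
                    ≤ μ _ * (2:ℝ≥0∞) ^ (2 * k + 2) * (2:ℝ≥0∞) ^ k := mul_le_mul' le_rfl h2
                  _ = (2:ℝ≥0∞) ^ (3 * k + 2) * μ _ := by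
                      rw [show 3 * k + 2 = (2 * k + 2) + k by omega, pow_add]
                      ring
  -- the summable series from the hypothesis
  set S : ℝ≥0∞ := ∑' m : ℕ, (2:ℝ≥0∞) ^ (m + 1) * μ {ω | L (2 ^ (m + 1)) * A < X ω} with hSdef
  have hS : S ≠ ⊤ := hsum A hA
  -- per-term bound for the double sum
  have hterm : ∀ j k : ℕ,
      (2:ℝ≥0∞) ^ (j + 1) * ((2:ℝ≥0∞) ^ (3 * k + 2) *
          μ {ω | L (2 ^ (j + 1)) * (2:ℝ) ^ k * C < X ω})
        ≤ (2⁻¹:ℝ≥0∞) ^ k * (4 * ((2:ℝ≥0∞) ^ (j + 4 * k + 1) *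
            μ {ω | L (2 ^ (j + 4 * k + 1)) * A < X ω})) := by
    intro j k
    have hco : (2⁻¹:ℝ≥0∞) ^ k * (4 * (2:ℝ≥0∞) ^ (j + 4 * k + 1))
        = (2:ℝ≥0∞) ^ (j + 1) * (2:ℝ≥0∞) ^ (3 * k + 2) := by
      have hc1 : (2:ℝ≥0∞) ^ (j + 1) * (2:ℝ≥0∞) ^ (3 * k + 2) = 2 ^ (j + 3 * k + 3) := by
        rw [← pow_add]; congr 1; omega
      have hc2 : (4:ℝ≥0∞) * (2:ℝ≥0∞) ^ (j + 4 * k + 1)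
          = (2:ℝ≥0∞) ^ (j + 3 * k + 3) * 2 ^ k := by
        rw [show (4:ℝ≥0∞) = 2 ^ 2 by norm_num, ← pow_add, ← pow_add]; congr 1; omega
      have hc3 : (2:ℝ≥0∞) ^ k * (2⁻¹:ℝ≥0∞) ^ k = 1 := by
        rw [← mul_pow, ENNReal.mul_inv_cancel two_ne_zero ENNReal.ofNat_ne_top, one_pow]
      rw [hc2, hc1, mul_comm ((2⁻¹:ℝ≥0∞) ^ k) _, mul_assoc, hc3, mul_one]
    calc (2:ℝ≥0∞) ^ (j + 1) * ((2:ℝ≥0∞) ^ (3 * k + 2) *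
            μ {ω | L (2 ^ (j + 1)) * (2:ℝ) ^ k * C < X ω})
        = ((2:ℝ≥0∞) ^ (j + 1) * (2:ℝ≥0∞) ^ (3 * k + 2)) *
            μ {ω | L (2 ^ (j + 1)) * (2:ℝ) ^ k * C < X ω} := (mul_assoc _ _ _).symm
      _ ≤ ((2:ℝ≥0∞) ^ (j + 1) * (2:ℝ≥0∞) ^ (3 * k + 2)) *
            μ {ω | L (2 ^ (j + 4 * k + 1)) * A < X ω} := mul_le_mul' le_rfl (hP j k)
      _ = (2⁻¹:ℝ≥0∞) ^ k * (4 * ((2:ℝ≥0∞) ^ (j + 4 * k + 1) *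
            μ {ω | L (2 ^ (j + 4 * k + 1)) * A < X ω})) := by
          rw [← hco]; ring
  -- assemble
  have hmain : (∑' j : ℕ, (2 : ℝ≥0∞) ^ (j + 1) *
      ∫⁻ u in Set.Ioi (1 : ℝ),
        μ {ω | L (2 ^ (j + 1)) * u * C < X ω} * ENNReal.ofReal (u ^ 2))
      ≤ 2 * (4 * S) := by
    calc (∑' j : ℕ, (2 : ℝ≥0∞) ^ (j + 1) *
          ∫⁻ u in Set.Ioi (1 : ℝ),
            μ {ω | L (2 ^ (j + 1)) * u * C < X ω} * ENNReal.ofReal (u ^ 2))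
        ≤ ∑' j : ℕ, (2 : ℝ≥0∞) ^ (j + 1) * ∑' k : ℕ, (2:ℝ≥0∞) ^ (3 * k + 2) *
            μ {ω | L (2 ^ (j + 1)) * (2:ℝ) ^ k * C < X ω} :=
          ENNReal.tsum_le_tsum fun j => mul_le_mul' le_rfl (hint j)
      _ = ∑' j : ℕ, ∑' k : ℕ, (2 : ℝ≥0∞) ^ (j + 1) * ((2:ℝ≥0∞) ^ (3 * k + 2) *
            μ {ω | L (2 ^ (j + 1)) * (2:ℝ) ^ k * C < X ω}) := by
          congr 1; ext j; rw [ENNReal.tsum_mul_left]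
      _ ≤ ∑' j : ℕ, ∑' k : ℕ, (2⁻¹:ℝ≥0∞) ^ k * (4 * ((2:ℝ≥0∞) ^ (j + 4 * k + 1) *
            μ {ω | L (2 ^ (j + 4 * k + 1)) * A < X ω})) :=
          ENNReal.tsum_le_tsum fun j => ENNReal.tsum_le_tsum fun k => hterm j k
      _ = ∑' k : ℕ, ∑' j : ℕ, (2⁻¹:ℝ≥0∞) ^ k * (4 * ((2:ℝ≥0∞) ^ (j + 4 * k + 1) *
            μ {ω | L (2 ^ (j + 4 * k + 1)) * A < X ω})) := ENNReal.tsum_comm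
      _ = ∑' k : ℕ, (2⁻¹:ℝ≥0∞) ^ k * (4 * ∑' j : ℕ, ((2:ℝ≥0∞) ^ (j + 4 * k + 1) *
            μ {ω | L (2 ^ (j + 4 * k + 1)) * A < X ω})) := by
          congr 1; ext k; rw [ENNReal.tsum_mul_left, ENNReal.tsum_mul_left]
      _ ≤ ∑' k : ℕ, (2⁻¹:ℝ≥0∞) ^ k * (4 * S) := by
          refine ENNReal.tsum_le_tsum fun k => mul_le_mul' le_rfl (mul_le_mul' le_rfl ?_)
          have hinj : Function.Injective (fun j : ℕ => j + 4 * k) := add_left_injective _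
          exact ENNReal.tsum_comp_le_tsum_of_injective hinj
            (fun m => (2:ℝ≥0∞) ^ (m + 1) * μ {ω | L (2 ^ (m + 1)) * A < X ω})
      _ = (∑' k : ℕ, (2⁻¹:ℝ≥0∞) ^ k) * (4 * S) := ENNReal.tsum_mul_right
      _ = 2 * (4 * S) := by
          rw [ENNReal.tsum_geometric, ENNReal.one_sub_inv_two, inv_inv]
  exact ne_top_of_le_ne_top (by
    exact ENNReal.mul_ne_top (by norm_num)
      (ENNReal.mul_ne_top (by norm_num) hS)) hmain
end

section
/- Let d ≥ 2 be an integer and for q > 0 define f_q(t) := t (1 + 2 ln t)^{−q} for t ≥ 1. Then there exists a constant K > 0 such that for every t ≥ 1, ∫_1^∞ ∫_1^∞ [ v (log(1+v))^{2(d−1)} / ( f_{d/2}(u) f_{1/2}(v) )² ] · 1{ t > f_{d/2}(u) f_{1/2}(v) } du dv ≤ K ( log(1+t) )^{2d}. -/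
open scoped ENNReal
open Real MeasureTheory Set

/-- The auxiliary function `f_q(t) = t (1 + 2 ln t)^{-q}`. -/
noncomputable def fAux (q t : ℝ) : ℝ := t * (1 + 2 * Real.log t) ^ (-q)

lemma base_ge_one {t : ℝ} (ht : 1 ≤ t) : 1 ≤ 1 + 2 * Real.log t := by
  nlinarith [Real.log_nonneg ht]

lemma fAux_pos {q t : ℝ} (ht : 1 ≤ t) : 0 < fAux q t := by
  have h := base_ge_one ht
  exact mul_pos (by linarith) (Real.rpow_pos_of_pos (by linarith) _)

lemma log_le_helper {n : ℕ} (hn : 1 ≤ n) {u : ℝ} (hu : 1 ≤ u) :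
    1 + 2 * Real.log u ≤ (1 + 4 * n) * u ^ ((n : ℝ)⁻¹) := by
  have hu0 : (0:ℝ) < u := by linarith
  have hn0 : (0:ℝ) < n := by exact_mod_cast hn
  have hx : (1:ℝ) ≤ u ^ ((n : ℝ)⁻¹) := Real.one_le_rpow hu (by positivity)
  have hlog : Real.log (u ^ ((n : ℝ)⁻¹)) = (n : ℝ)⁻¹ * Real.log u :=
    Real.log_rpow hu0 _
  have hle : Real.log (u ^ ((n : ℝ)⁻¹)) ≤ u ^ ((n : ℝ)⁻¹) := by
    have := Real.log_le_sub_one_of_pos (show (0:ℝ) < u ^ ((n:ℝ)⁻¹) by positivity)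
    linarith
  have h2 : Real.log u ≤ n * u ^ ((n : ℝ)⁻¹) := by
    have h3 : (n : ℝ)⁻¹ * Real.log u ≤ u ^ ((n : ℝ)⁻¹) := hlog ▸ hle
    calc Real.log u = n * ((n : ℝ)⁻¹ * Real.log u) := by field_simp
      _ ≤ n * u ^ ((n : ℝ)⁻¹) := mul_le_mul_of_nonneg_left h3 (le_of_lt hn0)
  nlinarith

lemma rpow_log_le (d : ℕ) (hd : 1 ≤ d) {u : ℝ} (hu : 1 ≤ u) {p : ℝ} (hp : 0 ≤ p) :
    (1 + 2 * Real.log u) ^ p ≤ (1 + 8 * (d:ℝ)) ^ p * u ^ (p / (2 * (d:ℝ))) := by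
  have hu0 : (0:ℝ) < u := by linarith
  have h := log_le_helper (n := 2 * d) (by omega) hu
  have hcast : ((2 * d : ℕ) : ℝ) = 2 * (d:ℝ) := by push_cast; ring
  rw [hcast] at h
  have hb1 : (1:ℝ) ≤ 1 + 2 * Real.log u := base_ge_one hu
  have h' : 1 + 2 * Real.log u ≤ (1 + 8 * (d:ℝ)) * u ^ ((2 * (d:ℝ))⁻¹) := by
    have : (1:ℝ) + 4 * (2 * (d:ℝ)) = 1 + 8 * (d:ℝ) := by ring
    linarith [h, this ▸ h]
  calc (1 + 2 * Real.log u) ^ p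
      ≤ ((1 + 8 * (d:ℝ)) * u ^ ((2 * (d:ℝ))⁻¹)) ^ p := by
        apply Real.rpow_le_rpow (by linarith) h' hp
    _ = (1 + 8 * (d:ℝ)) ^ p * (u ^ ((2 * (d:ℝ))⁻¹)) ^ p := by
        rw [Real.mul_rpow (by positivity) (by positivity)]
    _ = (1 + 8 * (d:ℝ)) ^ p * u ^ (p / (2 * (d:ℝ))) := by
        rw [← Real.rpow_mul hu0.le, inv_mul_eq_div]

lemma fAux_ge (d : ℕ) (hd : 1 ≤ d) {u : ℝ} (hu : 1 ≤ u) :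
    (1 + 8 * (d:ℝ)) ^ (-(d:ℝ)/2) ≤ fAux ((d:ℝ)/2) u := by
  have hu0 : (0:ℝ) < u := by linarith
  have hb1 : (1:ℝ) ≤ 1 + 2 * Real.log u := base_ge_one hu
  have hb0 : (0:ℝ) < 1 + 2 * Real.log u := by linarith
  have hd0 : (0:ℝ) < d := by exact_mod_cast hd
  have key : (1 + 2 * Real.log u) ^ ((d:ℝ)/2) ≤ (1 + 8 * (d:ℝ)) ^ ((d:ℝ)/2) * u := by
    have h := rpow_log_le d hd hu (p := (d:ℝ)/2) (by positivity)
    have he : (d:ℝ)/2 / (2 * (d:ℝ)) = (1:ℝ)/4 := by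
      field_simp
      ring
    rw [he] at h
    calc (1 + 2 * Real.log u) ^ ((d:ℝ)/2)
        ≤ (1 + 8 * (d:ℝ)) ^ ((d:ℝ)/2) * u ^ ((1:ℝ)/4) := h
      _ ≤ (1 + 8 * (d:ℝ)) ^ ((d:ℝ)/2) * u := by
          have h2 : u ^ ((1:ℝ)/4) ≤ u ^ (1:ℝ) :=
            Real.rpow_le_rpow_of_exponent_le hu (by norm_num)
          rw [Real.rpow_one] at h2
          exact mul_le_mul_of_nonneg_left h2 (by positivity)
  have hpow : (0:ℝ) < (1 + 2 * Real.log u) ^ ((d:ℝ)/2) := Real.rpow_pos_of_pos hb0 _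
  rw [fAux, Real.rpow_neg hb0.le, ← div_eq_mul_inv, le_div_iff₀ hpow]
  have hc : (1 + 8 * (d:ℝ)) ^ (-(d:ℝ)/2) * (1 + 8 * (d:ℝ)) ^ ((d:ℝ)/2) = 1 := by
    rw [← Real.rpow_add (by positivity)]
    have he : -(d:ℝ)/2 + (d:ℝ)/2 = 0 := by ring
    rw [he, Real.rpow_zero]
  calc (1 + 8 * (d:ℝ)) ^ (-(d:ℝ)/2) * (1 + 2 * Real.log u) ^ ((d:ℝ)/2)
      ≤ (1 + 8 * (d:ℝ)) ^ (-(d:ℝ)/2) * ((1 + 8 * (d:ℝ)) ^ ((d:ℝ)/2) * u) :=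
        mul_le_mul_of_nonneg_left key (by positivity)
    _ = ((1 + 8 * (d:ℝ)) ^ (-(d:ℝ)/2) * (1 + 8 * (d:ℝ)) ^ ((d:ℝ)/2)) * u := by ring
    _ = u := by rw [hc, one_mul]

lemma sqrt_le_fAux {v : ℝ} (hv : 1 ≤ v) : Real.sqrt v ≤ 2 * fAux (1/2) v := by
  have hv0 : (0:ℝ) < v := by linarith
  have hb1 : (1:ℝ) ≤ 1 + 2 * Real.log v := base_ge_one hv
  have hb0 : (0:ℝ) < 1 + 2 * Real.log v := by linarith
  have hpow : (0:ℝ) < (1 + 2 * Real.log v) ^ ((1:ℝ)/2) := Real.rpow_pos_of_pos hb0 _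
  have hmain : Real.sqrt v * (1 + 2 * Real.log v) ^ ((1:ℝ)/2) ≤ 2 * v := by
    rw [Real.sqrt_eq_rpow, ← Real.mul_rpow hv0.le hb0.le]
    have hb4 : v * (1 + 2 * Real.log v) ≤ (2*v)^2 := by
      nlinarith [Real.log_le_sub_one_of_pos hv0]
    calc (v * (1 + 2 * Real.log v)) ^ ((1:ℝ)/2)
        ≤ ((2*v)^2) ^ ((1:ℝ)/2) := Real.rpow_le_rpow (by positivity) hb4 (by norm_num)
      _ = 2*v := by rw [← Real.sqrt_eq_rpow, Real.sqrt_sq (by positivity)]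
  have h := (le_div_iff₀ hpow).mpr hmain
  rw [fAux, Real.rpow_neg hb0.le]
  exact h.trans_eq (by ring)

lemma fAux_sq_d (d : ℕ) {u : ℝ} (hu : 1 ≤ u) :
    (fAux ((d:ℝ)/2) u)^2 = u^2 * ((1 + 2 * Real.log u) ^ ((d:ℝ)))⁻¹ := by
  have hb1 : (1:ℝ) ≤ 1 + 2 * Real.log u := base_ge_one hu
  have hb0 : (0:ℝ) < 1 + 2 * Real.log u := by linarith
  rw [fAux, mul_pow, ← Real.rpow_natCast ((1 + 2 * Real.log u) ^ (-((d:ℝ)/2))) 2,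
      ← Real.rpow_mul hb0.le]
  have he : (-((d:ℝ)/2)) * ((2:ℕ):ℝ) = -(d:ℝ) := by push_cast; ring
  rw [he, Real.rpow_neg hb0.le]

lemma fAux_sq_half {v : ℝ} (hv : 1 ≤ v) :
    (fAux (1/2) v)^2 = v^2 * (1 + 2 * Real.log v)⁻¹ := by
  have hb1 : (1:ℝ) ≤ 1 + 2 * Real.log v := base_ge_one hv
  have hb0 : (0:ℝ) < 1 + 2 * Real.log v := by linarith
  rw [fAux, mul_pow, ← Real.rpow_natCast ((1 + 2 * Real.log v) ^ (-(1/2:ℝ))) 2,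
      ← Real.rpow_mul hb0.le]
  have he : (-(1/2:ℝ)) * ((2:ℕ):ℝ) = -1 := by push_cast; ring
  rw [he, Real.rpow_neg_one]

/-- Let `d ≥ 2`. There is a constant `K > 0` such that for every `t ≥ 1`,
`∫_1^∞ ∫_1^∞ v (log(1+v))^{2(d-1)} / (f_{d/2}(u) f_{1/2}(v))² ·
    1{t > f_{d/2}(u) f_{1/2}(v)} du dv ≤ K (log(1+t))^{2d}`. -/
theorem double_integral_log_bound (d : ℕ) (hd : 2 ≤ d) :
    ∃ K : ℝ, 0 < K ∧ ∀ t : ℝ, 1 ≤ t →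
      (∫⁻ u in Set.Ioi (1 : ℝ), ∫⁻ v in Set.Ioi (1 : ℝ),
        ENNReal.ofReal
          (if fAux ((d : ℝ) / 2) u * fAux (1 / 2) v < t then
            v * Real.log (1 + v) ^ (2 * (d - 1)) /
              (fAux ((d : ℝ) / 2) u * fAux (1 / 2) v) ^ 2
          else 0)) ≤
        ENNReal.ofReal (K * Real.log (1 + t) ^ (2 * d)) := by
  have hd1 : 1 ≤ d := by omega
  have hdR : (0:ℝ) ≤ d := Nat.cast_nonneg d
  have hbase1 : (1:ℝ) ≤ 1 + 8 * (d:ℝ) := by linarith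
  set D : ℝ := (1 + 8 * (d:ℝ)) ^ ((d:ℝ)) with hDdef
  have hD1 : (1:ℝ) ≤ D := Real.one_le_rpow hbase1 hdR
  have hD0 : (0:ℝ) < D := by linarith
  set c : ℝ := (1 + 8 * (d:ℝ)) ^ (-(d:ℝ)/2) with hcdef
  have hc0 : (0:ℝ) < c := Real.rpow_pos_of_pos (by linarith) _
  have hcD : c^2 * D = 1 := by
    rw [hcdef, hDdef, ← Real.rpow_natCast ((1 + 8 * (d:ℝ)) ^ (-(d:ℝ)/2)) 2,
        ← Real.rpow_mul (by linarith), ← Real.rpow_add (by linarith)]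
    have he : (-(d:ℝ)/2) * ((2:ℕ):ℝ) + (d:ℝ) = 0 := by push_cast; ring
    rw [he, Real.rpow_zero]
  have hlog2 : (0:ℝ) < Real.log 2 := Real.log_pos one_lt_two
  have hlog4D : (0:ℝ) ≤ Real.log (4*D) := Real.log_nonneg (by linarith)
  set C2 : ℝ := (1 + 2 * Real.log (4*D)) / Real.log 2 + 4 with hC2def
  have hC2 : 0 < C2 := by positivity
  refine ⟨2 * D * C2 ^ (2*d), by positivity, ?_⟩
  intro t ht
  have ht0 : (0:ℝ) < t := by linarith
  set V : ℝ := 4 * t^2 * D with hVdef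
  have hV4 : (4:ℝ) ≤ V := by
    have ht2 : (1:ℝ) ≤ t^2 := by nlinarith
    have h5 : (1:ℝ)*1 ≤ t^2*D := mul_le_mul ht2 hD1 zero_le_one (by positivity)
    rw [hVdef]; linarith
  have hV1 : (1:ℝ) < V := by linarith
  have hV0 : (0:ℝ) < V := by linarith
  set B : ℝ := 1 + 2 * Real.log (1+V) with hBdef
  have hlogV0 : (0:ℝ) ≤ Real.log (1+V) := Real.log_nonneg (by linarith)
  have hB1 : (1:ℝ) ≤ B := by rw [hBdef]; linarith
  have hB0 : (0:ℝ) ≤ B := by linarith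
  set A : ℝ → ℝ := fun u => (1 + 2 * Real.log u) ^ ((d:ℝ)) / u^2 with hAdef
  set hfun : ℝ → ℝ := fun v =>
    if v < V then Real.log (1+v) ^ (2*(d-1)) * (1 + 2 * Real.log v) / v else 0 with hhdef
  have hA_nonneg : ∀ u : ℝ, 1 < u → 0 ≤ A u := by
    intro u hu
    have hb1 : (1:ℝ) ≤ 1 + 2 * Real.log u := base_ge_one hu.le
    have hu0 : (0:ℝ) < u := by linarith
    rw [hAdef]
    positivity
  have hh_nonneg : ∀ v : ℝ, 1 < v → 0 ≤ hfun v := by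
    intro v hv
    have hb1 : (1:ℝ) ≤ 1 + 2 * Real.log v := base_ge_one hv.le
    have hv0 : (0:ℝ) < v := by linarith
    have hL0 : (0:ℝ) ≤ Real.log (1+v) := Real.log_nonneg (by linarith)
    rw [hhdef]
    dsimp only
    split
    · positivity
    · exact le_rfl

  -- pointwise bound
  have hpt : ∀ u ∈ Ioi (1:ℝ), ∀ v ∈ Ioi (1:ℝ),
      (if fAux ((d:ℝ)/2) u * fAux (1/2) v < t then
          v * Real.log (1+v) ^ (2*(d-1)) / (fAux ((d:ℝ)/2) u * fAux (1/2) v) ^ 2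
        else 0) ≤ A u * hfun v := by
    intro u hu v hv
    rw [mem_Ioi] at hu hv
    have hu1 : (1:ℝ) ≤ u := hu.le
    have hv1 : (1:ℝ) ≤ v := hv.le
    have hu0 : (0:ℝ) < u := by linarith
    have hv0 : (0:ℝ) < v := by linarith
    have hbu : (1:ℝ) ≤ 1 + 2 * Real.log u := base_ge_one hu1
    have hbv : (1:ℝ) ≤ 1 + 2 * Real.log v := base_ge_one hv1
    have hbu0 : (0:ℝ) < 1 + 2 * Real.log u := by linarith
    have hbv0 : (0:ℝ) < 1 + 2 * Real.log v := by linarith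
    have hL0 : (0:ℝ) ≤ Real.log (1+v) := Real.log_nonneg (by linarith)
    have hf0 : 0 < fAux ((d:ℝ)/2) u := fAux_pos hu1
    have hg0 : 0 < fAux (1/2) v := fAux_pos hv1
    by_cases hlt : fAux ((d:ℝ)/2) u * fAux (1/2) v < t
    · rw [if_pos hlt]
      have hfc : c ≤ fAux ((d:ℝ)/2) u := fAux_ge d hd1 hu1
      have hgs : Real.sqrt v ≤ 2 * fAux (1/2) v := sqrt_le_fAux hv1
      have hsv0 : 0 ≤ Real.sqrt v := Real.sqrt_nonneg v
      have h1 : c * Real.sqrt v < 2 * t := by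
        have h2 : c * Real.sqrt v ≤ fAux ((d:ℝ)/2) u * (2 * fAux (1/2) v) :=
          mul_le_mul hfc hgs hsv0 hf0.le
        have h4 : fAux ((d:ℝ)/2) u * (2 * fAux (1/2) v) = 2 * (fAux ((d:ℝ)/2) u * fAux (1/2) v) := by
          ring
        rw [h4] at h2
        linarith
      have h2 : c^2 * v < 4 * t^2 := by
        have h3 := mul_self_lt_mul_self (by positivity) h1
        have hvv : Real.sqrt v * Real.sqrt v = v := Real.mul_self_sqrt hv0.le
        have h4 : c^2 * v = (c * Real.sqrt v) * (c * Real.sqrt v) := by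
          linear_combination c^2 * hvv.symm
        calc c^2 * v = (c * Real.sqrt v) * (c * Real.sqrt v) := h4
          _ < (2*t) * (2*t) := h3
          _ = 4 * t^2 := by ring
      have hvV : v < V := by
        calc v = (c^2 * v) * D := by rw [mul_comm (c^2) v, mul_assoc, hcD, mul_one]
          _ < (4 * t^2) * D := mul_lt_mul_of_pos_right h2 hD0
          _ = V := by rw [hVdef]
      have hpu : (0:ℝ) < (1 + 2 * Real.log u) ^ ((d:ℝ)) := Real.rpow_pos_of_pos hbu0 _
      have heq : v * Real.log (1+v) ^ (2*(d-1)) / (fAux ((d:ℝ)/2) u * fAux (1/2) v) ^ 2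
          = A u * (Real.log (1+v) ^ (2*(d-1)) * (1 + 2 * Real.log v) / v) := by
        rw [mul_pow, fAux_sq_d d hu1, fAux_sq_half hv1, hAdef]
        field_simp
      rw [heq]
      simp only [hhdef]
      rw [if_pos hvV]
    · rw [if_neg hlt]
      exact mul_nonneg (hA_nonneg u hu) (hh_nonneg v hv)
  -- the v-integral bound
  have hJ : (∫⁻ v in Ioi (1:ℝ), ENNReal.ofReal (hfun v)) ≤ ENNReal.ofReal (B ^ (2*d)) := by
    have step1 : ∀ v ∈ Ioi (1:ℝ), ENNReal.ofReal (hfun v)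
        ≤ (Iio V).indicator (fun v => ENNReal.ofReal (B ^ (2*d-1) * v⁻¹)) v := by
      intro v hv
      rw [mem_Ioi] at hv
      have hv0 : (0:ℝ) < v := by linarith
      by_cases hvV : v < V
      · rw [Set.indicator_of_mem (mem_Iio.mpr hvV)]
        have hbv : (1:ℝ) ≤ 1 + 2 * Real.log v := base_ge_one hv.le
        have hL0 : (0:ℝ) ≤ Real.log (1+v) := Real.log_nonneg (by linarith)
        have hLV : Real.log (1+v) ≤ Real.log (1+V) := Real.log_le_log (by linarith) (by linarith)
        have hLB : Real.log (1+v) ≤ B := by rw [hBdef]; linarith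
        have hlv : Real.log v ≤ Real.log (1+v) := Real.log_le_log hv0 (by linarith)
        have hbvB : 1 + 2 * Real.log v ≤ B := by rw [hBdef]; linarith
        apply ENNReal.ofReal_le_ofReal
        simp only [hhdef]
        rw [if_pos hvV]
        have hnum : Real.log (1+v) ^ (2*(d-1)) * (1 + 2 * Real.log v) ≤ B ^ (2*d-1) := by
          have hpow : Real.log (1+v) ^ (2*(d-1)) ≤ B ^ (2*(d-1)) := pow_le_pow_left₀ hL0 hLB _
          have hk : 2*(d-1)+1 = 2*d-1 := by omega
          calc Real.log (1+v) ^ (2*(d-1)) * (1 + 2 * Real.log v)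
              ≤ B ^ (2*(d-1)) * B := mul_le_mul hpow hbvB (by linarith) (by positivity)
            _ = B ^ (2*(d-1)+1) := (pow_succ B _).symm
            _ = B ^ (2*d-1) := by rw [hk]
        rw [← div_eq_mul_inv]
        gcongr
      · simp only [hhdef]
        rw [if_neg hvV]
        simp
    calc (∫⁻ v in Ioi (1:ℝ), ENNReal.ofReal (hfun v))
        ≤ ∫⁻ v in Ioi (1:ℝ), (Iio V).indicator (fun v => ENNReal.ofReal (B ^ (2*d-1) * v⁻¹)) v :=
        setLIntegral_mono' measurableSet_Ioi step1
      _ = ∫⁻ v in Ioo (1:ℝ) V, ENNReal.ofReal (B ^ (2*d-1) * v⁻¹) := by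
        rw [lintegral_indicator measurableSet_Iio, Measure.restrict_restrict measurableSet_Iio,
            Set.Iio_inter_Ioi]
      _ = ENNReal.ofReal (∫ v in Ioo (1:ℝ) V, B ^ (2*d-1) * v⁻¹) := by
        rw [← ofReal_integral_eq_lintegral_ofReal]
        · have hint : IntervalIntegrable (fun x:ℝ => x⁻¹) volume 1 V := by
            apply intervalIntegral.intervalIntegrable_inv
            · intro x hx
              rw [Set.uIcc_of_le hV1.le] at hx
              exact ne_of_gt (by linarith [hx.1])
            · exact continuousOn_id
          have h2 : IntegrableOn (fun x:ℝ => x⁻¹) (Ioc 1 V) :=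
            (intervalIntegrable_iff_integrableOn_Ioc_of_le hV1.le).mp hint
          exact (h2.mono_set Ioo_subset_Ioc_self).const_mul _
        · refine (ae_restrict_iff' measurableSet_Ioo).mpr (ae_of_all _ fun v hv => ?_)
          have hv0 : (0:ℝ) < v := lt_trans one_pos hv.1
          positivity
      _ ≤ ENNReal.ofReal (B ^ (2*d)) := by
        apply ENNReal.ofReal_le_ofReal
        have hIoo : (∫ v in Ioo (1:ℝ) V, v⁻¹) = Real.log V := by
          rw [← integral_Ioc_eq_integral_Ioo, ← intervalIntegral.integral_of_le hV1.le,
              integral_inv (by rw [Set.uIcc_of_le hV1.le]; norm_num [Set.mem_Icc]), div_one]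
        rw [MeasureTheory.integral_const_mul, hIoo]
        have hlogVB : Real.log V ≤ B := by
          have h1 : Real.log V ≤ Real.log (1+V) := Real.log_le_log hV0 (by linarith)
          rw [hBdef]; linarith
        have hk : 2*d-1+1 = 2*d := by omega
        calc B ^ (2*d-1) * Real.log V ≤ B ^ (2*d-1) * B :=
            mul_le_mul_of_nonneg_left hlogVB (by positivity)
          _ = B ^ (2*d-1+1) := (pow_succ B _).symm
          _ = B ^ (2*d) := by rw [hk]
  have hJtop : (∫⁻ v in Ioi (1:ℝ), ENNReal.ofReal (hfun v)) ≠ ⊤ :=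
    ne_top_of_le_ne_top ENNReal.ofReal_ne_top hJ
  -- the u-integral bound
  have hU : (∫⁻ u in Ioi (1:ℝ), ENNReal.ofReal (A u)) ≤ ENNReal.ofReal (2*D) := by
    have step1 : ∀ u ∈ Ioi (1:ℝ),
        ENNReal.ofReal (A u) ≤ ENNReal.ofReal (D * u ^ (-(3/2) : ℝ)) := by
      intro u hu
      rw [mem_Ioi] at hu
      apply ENNReal.ofReal_le_ofReal
      have hu1 : (1:ℝ) ≤ u := hu.le
      have hu0 : (0:ℝ) < u := by linarith
      have hbu : (1:ℝ) ≤ 1 + 2 * Real.log u := base_ge_one hu1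
      have h := rpow_log_le d hd1 hu1 (p := (d:ℝ)) hdR
      have hdne : (d:ℝ) ≠ 0 := by
        have : (0:ℝ) < d := by exact_mod_cast hd1
        exact ne_of_gt this
      have he : (d:ℝ) / (2*(d:ℝ)) = (1:ℝ)/2 := by
        field_simp
      rw [he, ← hDdef] at h
      rw [hAdef]
      dsimp only
      rw [div_le_iff₀ (by positivity)]
      calc (1 + 2 * Real.log u) ^ ((d:ℝ)) ≤ D * u ^ ((1:ℝ)/2) := h
        _ = D * u ^ (-(3/2):ℝ) * u^2 := by
            rw [mul_assoc, ← Real.rpow_natCast u 2, ← Real.rpow_add hu0]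
            norm_num
    calc (∫⁻ u in Ioi (1:ℝ), ENNReal.ofReal (A u))
        ≤ ∫⁻ u in Ioi (1:ℝ), ENNReal.ofReal (D * u ^ (-(3/2):ℝ)) :=
        setLIntegral_mono' measurableSet_Ioi step1
      _ = ENNReal.ofReal (∫ u in Ioi (1:ℝ), D * u ^ (-(3/2):ℝ)) := by
        rw [← ofReal_integral_eq_lintegral_ofReal]
        · exact (integrableOn_Ioi_rpow_of_lt (by norm_num) one_pos).const_mul D
        · refine (ae_restrict_iff' measurableSet_Ioi).mpr (ae_of_all _ fun u hu => ?_)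
          rw [mem_Ioi] at hu
          have hu0 : (0:ℝ) < u := lt_trans one_pos hu
          positivity
      _ ≤ ENNReal.ofReal (2*D) := by
        apply ENNReal.ofReal_le_ofReal
        rw [MeasureTheory.integral_const_mul, integral_Ioi_rpow_of_lt (by norm_num) one_pos,
            Real.one_rpow]
        norm_num
        linarith
  -- final real inequality
  have hlt2 : Real.log 2 ≤ Real.log (1+t) := Real.log_le_log (by norm_num) (by linarith)
  have hVbound : 1 + V ≤ 4*D*(1+t)^2 := by
    have h5 : (0:ℝ) ≤ D*t := mul_nonneg hD0.le ht0.le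
    rw [hVdef]; nlinarith [h5, hD1]
  have hlogVt : Real.log (1+V) ≤ Real.log (4*D) + 2 * Real.log (1+t) := by
    calc Real.log (1+V) ≤ Real.log (4*D*(1+t)^2) := Real.log_le_log (by linarith) hVbound
      _ = Real.log (4*D) + Real.log ((1+t)^2) := Real.log_mul (by positivity) (by positivity)
      _ = Real.log (4*D) + 2 * Real.log (1+t) := by rw [Real.log_pow]; push_cast; ring
  have hlogt0 : (0:ℝ) ≤ Real.log (1+t) := Real.log_nonneg (by linarith)
  have hBle : B ≤ C2 * Real.log (1+t) := by
    have h1 : 1 + 2 * Real.log (4*D) ≤ (1 + 2 * Real.log (4*D))/Real.log 2 * Real.log (1+t) := by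
      rw [div_mul_eq_mul_div, le_div_iff₀ hlog2]
      exact mul_le_mul_of_nonneg_left hlt2 (by linarith)
    rw [hBdef, hC2def]
    have hexp : ((1 + 2 * Real.log (4*D))/Real.log 2 + 4) * Real.log (1+t)
        = (1 + 2 * Real.log (4*D))/Real.log 2 * Real.log (1+t) + 4 * Real.log (1+t) := by ring
    rw [hexp]
    linarith
  have hfinal : 2*D*B^(2*d) ≤ 2 * D * C2 ^ (2*d) * Real.log (1+t) ^ (2*d) := by
    have hp : B^(2*d) ≤ (C2 * Real.log (1+t))^(2*d) := pow_le_pow_left₀ hB0 hBle _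
    calc 2*D*B^(2*d) ≤ 2*D*(C2 * Real.log (1+t))^(2*d) :=
        mul_le_mul_of_nonneg_left hp (by positivity)
      _ = 2 * D * C2 ^ (2*d) * Real.log (1+t) ^ (2*d) := by rw [mul_pow]; ring
  -- assembly
  calc (∫⁻ u in Set.Ioi (1 : ℝ), ∫⁻ v in Set.Ioi (1 : ℝ),
        ENNReal.ofReal
          (if fAux ((d : ℝ) / 2) u * fAux (1 / 2) v < t then
            v * Real.log (1 + v) ^ (2 * (d - 1)) /
              (fAux ((d : ℝ) / 2) u * fAux (1 / 2) v) ^ 2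
          else 0))
      ≤ ∫⁻ u in Ioi (1:ℝ), ∫⁻ v in Ioi (1:ℝ), ENNReal.ofReal (A u * hfun v) := by
        refine setLIntegral_mono' measurableSet_Ioi fun u hu => ?_
        refine setLIntegral_mono' measurableSet_Ioi fun v hv => ?_
        exact ENNReal.ofReal_le_ofReal (hpt u hu v hv)
    _ = ∫⁻ u in Ioi (1:ℝ), ENNReal.ofReal (A u) * ∫⁻ v in Ioi (1:ℝ), ENNReal.ofReal (hfun v) := by
        refine setLIntegral_congr_fun measurableSet_Ioi (fun u hu => ?_)
        rw [← lintegral_const_mul' (ENNReal.ofReal (A u)) _ ENNReal.ofReal_ne_top]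
        exact lintegral_congr fun v => ENNReal.ofReal_mul (hA_nonneg u hu)
    _ = (∫⁻ u in Ioi (1:ℝ), ENNReal.ofReal (A u)) * ∫⁻ v in Ioi (1:ℝ), ENNReal.ofReal (hfun v) :=
        lintegral_mul_const' _ _ hJtop
    _ ≤ ENNReal.ofReal (2*D) * ENNReal.ofReal (B ^ (2*d)) := mul_le_mul' hU hJ
    _ = ENNReal.ofReal (2*D * B ^ (2*d)) := (ENNReal.ofReal_mul (by positivity)).symm
    _ ≤ ENNReal.ofReal (2 * D * C2 ^ (2*d) * Real.log (1+t) ^ (2*d)) :=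
        ENNReal.ofReal_le_ofReal hfinal
end

section
/- Let γ > 0 and p ≥ 0. Then there exists a constant K > 0, depending only on γ and p, such that for every z ≥ 1, ∫_1^∞ exp( −(z u)^γ ) u ( log(1+u) )^{p} du ≤ K exp( −z^γ ). -/
open Real MeasureTheory Set

/-- Let `γ > 0` and `p ≥ 0`. There is a constant `K > 0`, depending only on `γ`
and `p`, such that for every `z ≥ 1`,
`∫_1^∞ exp(-(z u)^γ) u (log(1+u))^p du ≤ K exp(-z^γ)`. -/
theorem integral_exp_stretched_bound (γ p : ℝ) (hγ : 0 < γ) (hp : 0 ≤ p) :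
    ∃ K : ℝ, 0 < K ∧ ∀ z : ℝ, 1 ≤ z →
      (∫⁻ u in Set.Ioi (1 : ℝ),
          ENNReal.ofReal (Real.exp (-((z * u) ^ γ)) * u * Real.log (1 + u) ^ p)) ≤
        ENNReal.ofReal (K * Real.exp (-(z ^ γ))) := by
  -- integrability of the majorant `exp(-u^γ) * u^(p+1)`
  obtain ⟨n, hn⟩ := exists_nat_gt ((p + 2) / γ)
  have hexp : p + 1 - (n : ℝ) * γ < -1 := by
    rw [div_lt_iff₀ hγ] at hn; linarith
  have hmaj : IntegrableOn (fun u : ℝ => (n.factorial : ℝ) * u ^ (p + 1 - (n : ℝ) * γ))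
      (Ioi 1) := (integrableOn_Ioi_rpow_of_lt hexp one_pos).const_mul _
  have hmeas : AEStronglyMeasurable (fun u : ℝ => Real.exp (-(u ^ γ)) * u ^ (p + 1))
      (volume.restrict (Ioi 1)) := by
    refine ContinuousOn.aestronglyMeasurable ?_ measurableSet_Ioi
    have c1 : ContinuousOn (fun u : ℝ => u ^ γ) (Ioi 1) := fun x hx =>
      (Real.continuousAt_rpow_const x γ
        (Or.inl (ne_of_gt (lt_trans one_pos hx)))).continuousWithinAt
    exact (Real.continuous_exp.comp_continuousOn c1.neg).mul
      (continuousOn_id.rpow_const fun x hx =>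
        Or.inl (ne_of_gt (lt_trans one_pos hx)))
  -- key pointwise decay bound
  have hdecay : ∀ u : ℝ, 1 < u →
      Real.exp (-(u ^ γ)) ≤ (n.factorial : ℝ) * u ^ (-((n : ℝ) * γ)) := by
    intro u hu
    have hu0 : (0 : ℝ) < u := lt_trans one_pos hu
    have h1 : (0 : ℝ) < u ^ ((n : ℝ) * γ) := Real.rpow_pos_of_pos hu0 _
    have h2 : (0 : ℝ) < Real.exp (u ^ γ) := Real.exp_pos _
    have hb : u ^ ((n : ℝ) * γ) ≤ (n.factorial : ℝ) * Real.exp (u ^ γ) := by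
      have h := Real.pow_div_factorial_le_exp (x := u ^ γ) (Real.rpow_nonneg hu0.le γ) n
      rw [div_le_iff₀ (by positivity)] at h
      calc u ^ ((n : ℝ) * γ) = (u ^ γ) ^ n := by
            rw [mul_comm, Real.rpow_mul hu0.le, Real.rpow_natCast]
        _ ≤ Real.exp (u ^ γ) * (n.factorial : ℝ) := h
        _ = (n.factorial : ℝ) * Real.exp (u ^ γ) := mul_comm _ _
    rw [Real.exp_neg, Real.rpow_neg hu0.le, inv_eq_one_div, inv_eq_one_div,
      mul_one_div, div_le_div_iff₀ h2 h1, one_mul]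
    exact hb
  have hg_int : IntegrableOn (fun u : ℝ => Real.exp (-(u ^ γ)) * u ^ (p + 1))
      (Ioi 1) := by
    refine hmaj.mono' hmeas ?_
    refine (ae_restrict_iff' measurableSet_Ioi).2 (ae_of_all _ fun u hu => ?_)
    have hu : (1 : ℝ) < u := hu
    have hu0 : (0 : ℝ) < u := lt_trans one_pos hu
    have hnn : 0 ≤ Real.exp (-(u ^ γ)) * u ^ (p + 1) := by positivity
    rw [Real.norm_eq_abs, abs_of_nonneg hnn]
    calc Real.exp (-(u ^ γ)) * u ^ (p + 1)
        ≤ ((n.factorial : ℝ) * u ^ (-((n : ℝ) * γ))) * u ^ (p + 1) := by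
          apply mul_le_mul_of_nonneg_right (hdecay u hu) (by positivity)
      _ = (n.factorial : ℝ) * u ^ (p + 1 - (n : ℝ) * γ) := by
          rw [mul_assoc, ← Real.rpow_add hu0]; ring_nf
  -- the constant
  set K₀ : ℝ := ∫ u in Ioi (1 : ℝ), Real.exp (-(u ^ γ)) * u ^ (p + 1) with hK₀
  have hgnn : 0 ≤ᵐ[volume.restrict (Ioi (1 : ℝ))]
      fun u : ℝ => Real.exp (-(u ^ γ)) * u ^ (p + 1) := by
    refine (ae_restrict_iff' measurableSet_Ioi).2 (ae_of_all _ fun u hu => ?_)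
    have hu0 : (0 : ℝ) < u := lt_trans one_pos hu
    positivity
  have hK₀nn : 0 ≤ K₀ := integral_nonneg_of_ae hgnn
  refine ⟨Real.exp 1 * (K₀ + 1), by positivity, fun z hz => ?_⟩
  have hz0 : (0 : ℝ) < z := lt_of_lt_of_le one_pos hz
  have hzγ : (1 : ℝ) ≤ z ^ γ := Real.one_le_rpow hz hγ.le
  -- pointwise bound on the integrand
  have hpt : ∀ u : ℝ, u ∈ Ioi (1 : ℝ) →
      Real.exp (-((z * u) ^ γ)) * u * Real.log (1 + u) ^ p ≤
        (Real.exp 1 * Real.exp (-(z ^ γ))) *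
          (Real.exp (-(u ^ γ)) * u ^ (p + 1)) := by
    intro u hu
    have hu1 : (1 : ℝ) < u := hu
    have hu0 : (0 : ℝ) < u := lt_trans one_pos hu1
    have huγ : (1 : ℝ) ≤ u ^ γ := Real.one_le_rpow hu1.le hγ.le
    have hA : Real.exp (-((z * u) ^ γ)) ≤
        Real.exp 1 * Real.exp (-(z ^ γ)) * Real.exp (-(u ^ γ)) := by
      rw [Real.mul_rpow hz0.le hu0.le]
      calc Real.exp (-(z ^ γ * u ^ γ)) ≤ Real.exp (1 - z ^ γ - u ^ γ) :=
            Real.exp_le_exp.2 (by nlinarith)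
        _ = Real.exp 1 * Real.exp (-(z ^ γ)) * Real.exp (-(u ^ γ)) := by
            rw [← Real.exp_add, ← Real.exp_add]; ring_nf
    have hlognn : 0 ≤ Real.log (1 + u) := Real.log_nonneg (by linarith)
    have hlog : Real.log (1 + u) ≤ u := by
      have := Real.log_le_sub_one_of_pos (by linarith : (0 : ℝ) < 1 + u)
      linarith
    have hB : u * Real.log (1 + u) ^ p ≤ u ^ (p + 1) := by
      have h1 : Real.log (1 + u) ^ p ≤ u ^ p := Real.rpow_le_rpow hlognn hlog hp
      calc u * Real.log (1 + u) ^ p ≤ u * u ^ p := by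
            exact mul_le_mul_of_nonneg_left h1 hu0.le
        _ = u ^ (p + 1) := by
            rw [Real.rpow_add hu0, Real.rpow_one]; ring
    calc Real.exp (-((z * u) ^ γ)) * u * Real.log (1 + u) ^ p
        = Real.exp (-((z * u) ^ γ)) * (u * Real.log (1 + u) ^ p) := by ring
      _ ≤ (Real.exp 1 * Real.exp (-(z ^ γ)) * Real.exp (-(u ^ γ))) * u ^ (p + 1) := by
          apply mul_le_mul hA hB (by positivity) (by positivity)
      _ = (Real.exp 1 * Real.exp (-(z ^ γ))) *
          (Real.exp (-(u ^ γ)) * u ^ (p + 1)) := by ring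
  calc (∫⁻ u in Set.Ioi (1 : ℝ),
          ENNReal.ofReal (Real.exp (-((z * u) ^ γ)) * u * Real.log (1 + u) ^ p))
      ≤ ∫⁻ u in Set.Ioi (1 : ℝ),
          ENNReal.ofReal ((Real.exp 1 * Real.exp (-(z ^ γ))) *
            (Real.exp (-(u ^ γ)) * u ^ (p + 1))) := by
        refine lintegral_mono_ae ?_
        refine (ae_restrict_iff' measurableSet_Ioi).2 (ae_of_all _ fun u hu => ?_)
        exact ENNReal.ofReal_le_ofReal (hpt u hu)
    _ = ENNReal.ofReal (Real.exp 1 * Real.exp (-(z ^ γ))) *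
        ∫⁻ u in Set.Ioi (1 : ℝ),
          ENNReal.ofReal (Real.exp (-(u ^ γ)) * u ^ (p + 1)) := by
        simp_rw [ENNReal.ofReal_mul (by positivity :
          (0 : ℝ) ≤ Real.exp 1 * Real.exp (-(z ^ γ)))]
        exact lintegral_const_mul' _ _ ENNReal.ofReal_ne_top
    _ = ENNReal.ofReal (Real.exp 1 * Real.exp (-(z ^ γ))) * ENNReal.ofReal K₀ := by
        rw [← ofReal_integral_eq_lintegral_ofReal hg_int hgnn]
    _ ≤ ENNReal.ofReal ((Real.exp 1 * (K₀ + 1)) * Real.exp (-(z ^ γ))) := by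
        rw [← ENNReal.ofReal_mul (by positivity)]
        refine ENNReal.ofReal_le_ofReal ?_
        have h1 : (0 : ℝ) < Real.exp 1 := Real.exp_pos 1
        have h2 : (0 : ℝ) < Real.exp (-(z ^ γ)) := Real.exp_pos _
        nlinarith
end
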